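/- arXiv:1603.03342 — 8 statements merged into one kernel-verified Lean document; each statement's English description precedes it below -/
import Mathlib

section
/- Let N ≥ 2, let m₁,…,m_N > 0, and let q = (q₁,…,q_N) be a nonsingular configuration in S³ with qᵢ = (xᵢ,yᵢ,zᵢ,wᵢ). For α,β ∈ ℝ let A_{α,β}(t) be the 4×4 block-diagonal matrix with upper block [[cos αt, −sin αt],[sin αt, cos αt]] acting on (x,y) and lower block [[cos βt, −sin βt],[sin βt, cos βt]] acting on (z,w). Then the curve t ↦ (A_{α,β}(t)q₁,…,A_{α,β}(t)q_N) satisfies, for all t ∈ ℝ and all i, the equations of motion mᵢ q̈ᵢ(t) = ∇_{qᵢ}U(q(t)) − mᵢ (q̇ᵢ(t)·q̇ᵢ(t)) qᵢ(t), if and only if for every i one has mᵢ(β² − α²)·(xᵢ(wᵢ²+zᵢ²), yᵢ(wᵢ²+zᵢ²), −zᵢ(xᵢ²+yᵢ²), −wᵢ(xᵢ²+yᵢ²)) = ∇_{qᵢ}U(q). -/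
noncomputable section
open Real Finset

/-- Vectors in `ℝ⁴`. -/
abbrev V4 : Type := Fin 4 → ℝ

/-- Euclidean dot product on `ℝ⁴`. -/
def dot4 (p q : V4) : ℝ := p 0 * q 0 + p 1 * q 1 + p 2 * q 2 + p 3 * q 3

/-- Minkowski bilinear form on `ℝ⁴`. -/
def mdot4 (p q : V4) : ℝ := p 0 * q 0 + p 1 * q 1 + p 2 * q 2 - p 3 * q 3

/-- The unit sphere `S³ ⊂ ℝ⁴`. -/
def sphere3 : Set V4 := {p | p 0 ^ 2 + p 1 ^ 2 + p 2 ^ 2 + p 3 ^ 2 = 1}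

/-- The upper hyperbolic sphere `H³ ⊂ ℝ⁴`. -/
def hyper3 : Set V4 := {p | p 0 ^ 2 + p 1 ^ 2 + p 2 ^ 2 - p 3 ^ 2 = -1 ∧ 0 < p 3}

/-- Inverse hyperbolic cosine. -/
def arcosh (x : ℝ) : ℝ := Real.log (x + Real.sqrt (x ^ 2 - 1))

/-- Spherical distance on `S³`. -/
def dS (p q : V4) : ℝ := Real.arccos (dot4 p q)

/-- Hyperbolic distance on `H³`. -/
def dH (p q : V4) : ℝ := _root_.arcosh (-(mdot4 p q))

/-- Gradient of the cotangent force function on `(S³)^N` at the body `i`. -/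
def gradUS {N : ℕ} (m : Fin N → ℝ) (q : Fin N → V4) (i : Fin N) : V4 :=
  ∑ j ∈ Finset.univ.erase i,
    (m i * m j / (Real.sin (dS (q i) (q j))) ^ 3) • (q j - Real.cos (dS (q i) (q j)) • q i)

/-- Gradient of the cotangent force function on `(H³)^N` at the body `i`. -/
def gradUH {N : ℕ} (m : Fin N → ℝ) (q : Fin N → V4) (i : Fin N) : V4 :=
  ∑ j ∈ Finset.univ.erase i,
    (m i * m j / (Real.sinh (dH (q i) (q j))) ^ 3) • (q j - Real.cosh (dH (q i) (q j)) • q i)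

/-- Gradient of the moment of inertia `I(q) = Σ mᵢ(xᵢ²+yᵢ²)` on `(S³)^N` at the body `i`. -/
def gradIS {N : ℕ} (m : Fin N → ℝ) (q : Fin N → V4) (i : Fin N) : V4 :=
  (2 * m i) •
    ![q i 0 * (q i 2 ^ 2 + q i 3 ^ 2), q i 1 * (q i 2 ^ 2 + q i 3 ^ 2),
      -(q i 2 * (q i 0 ^ 2 + q i 1 ^ 2)), -(q i 3 * (q i 0 ^ 2 + q i 1 ^ 2))]

/-- Gradient of the moment of inertia `I(q) = Σ mᵢ(xᵢ²+yᵢ²)` on `(H³)^N` at the body `i`. -/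
def gradIH {N : ℕ} (m : Fin N → ℝ) (q : Fin N → V4) (i : Fin N) : V4 :=
  (2 * m i) •
    ![q i 0 * (q i 3 ^ 2 - q i 2 ^ 2), q i 1 * (q i 3 ^ 2 - q i 2 ^ 2),
      q i 2 * (q i 0 ^ 2 + q i 1 ^ 2), q i 3 * (q i 0 ^ 2 + q i 1 ^ 2)]

/-- The action of the rotation `A_{α,β}(t) ∈ SO(4)` on `ℝ⁴`. -/
def rotA (α β t : ℝ) (p : V4) : V4 :=
  ![Real.cos (α * t) * p 0 - Real.sin (α * t) * p 1,
    Real.sin (α * t) * p 0 + Real.cos (α * t) * p 1,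
    Real.cos (β * t) * p 2 - Real.sin (β * t) * p 3,
    Real.sin (β * t) * p 2 + Real.cos (β * t) * p 3]

/-- The action of the transformation `B_{α,β}(t) ∈ SO(3,1)` on `ℝ⁴`. -/
def rotB (α β t : ℝ) (p : V4) : V4 :=
  ![Real.cos (α * t) * p 0 - Real.sin (α * t) * p 1,
    Real.sin (α * t) * p 0 + Real.cos (α * t) * p 1,
    Real.cosh (β * t) * p 2 + Real.sinh (β * t) * p 3,
    Real.sinh (β * t) * p 2 + Real.cosh (β * t) * p 3]

/-- The great circle `S¹_xy`. -/
def S1xy : Set V4 := {p | p 0 ^ 2 + p 1 ^ 2 = 1 ∧ p 2 = 0 ∧ p 3 = 0}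

/-- The great circle `S¹_zw`. -/
def S1zw : Set V4 := {p | p 2 ^ 2 + p 3 ^ 2 = 1 ∧ p 0 = 0 ∧ p 1 = 0}

/-- The geodesic `H¹_zw`. -/
def H1zw : Set V4 := {p | p 3 ^ 2 - p 2 ^ 2 = 1 ∧ 0 < p 3 ∧ p 0 = 0 ∧ p 1 = 0}


/-- Infinitesimal generator of the rotation `A_{α,β}`. -/
def Jv (α β : ℝ) (p : V4) : V4 := ![-(α * p 1), α * p 0, -(β * p 3), β * p 2]

lemma rotA_hasDeriv (α β t : ℝ) (p : V4) :
    HasDerivAt (fun s => rotA α β s p) (rotA α β t (Jv α β p)) t := by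
  rw [hasDerivAt_pi]
  have hc : ∀ γ : ℝ, HasDerivAt (fun s => Real.cos (γ*s)) (-Real.sin (γ*t) * γ) t := fun γ => by
    simpa [Function.comp_def] using (Real.hasDerivAt_cos (γ*t)).comp t ((hasDerivAt_id t).const_mul γ)
  have hs : ∀ γ : ℝ, HasDerivAt (fun s => Real.sin (γ*s)) (Real.cos (γ*t) * γ) t := fun γ => by
    simpa [Function.comp_def] using (Real.hasDerivAt_sin (γ*t)).comp t ((hasDerivAt_id t).const_mul γ)
  intro i
  fin_cases i
  · show HasDerivAt (fun s => rotA α β s p 0) (rotA α β t (Jv α β p) 0) t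
    simp only [rotA, Jv, Matrix.cons_val_zero, Matrix.cons_val_one, Matrix.head_cons]
    convert ((hc α).mul_const (p 0)).sub ((hs α).mul_const (p 1)) using 1
    case e'_9 => ring
    all_goals rfl
  · show HasDerivAt (fun s => rotA α β s p 1) (rotA α β t (Jv α β p) 1) t
    simp only [rotA, Jv, Matrix.cons_val_zero, Matrix.cons_val_one, Matrix.head_cons]
    convert ((hs α).mul_const (p 0)).add ((hc α).mul_const (p 1)) using 1
    case e'_9 => ring
    all_goals rfl
  · show HasDerivAt (fun s => rotA α β s p 2) (rotA α β t (Jv α β p) 2) t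
    simp only [rotA, Jv, Matrix.cons_val_zero, Matrix.cons_val_one, Matrix.head_cons,
      Matrix.cons_val_two, Matrix.tail_cons, Matrix.cons_val_three]
    convert ((hc β).mul_const (p 2)).sub ((hs β).mul_const (p 3)) using 1
    case e'_9 => ring
    all_goals rfl
  · show HasDerivAt (fun s => rotA α β s p 3) (rotA α β t (Jv α β p) 3) t
    simp only [rotA, Jv, Matrix.cons_val_zero, Matrix.cons_val_one, Matrix.head_cons,
      Matrix.cons_val_two, Matrix.tail_cons, Matrix.cons_val_three]
    convert ((hs β).mul_const (p 2)).add ((hc β).mul_const (p 3)) using 1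
    case e'_9 => ring
    all_goals rfl

/-- `rotA` as a linear map. -/
def rotL (α β t : ℝ) : V4 →ₗ[ℝ] V4 where
  toFun := rotA α β t
  map_add' u v := by
    funext i; fin_cases i <;> simp [rotA, Pi.add_apply] <;> ring
  map_smul' c u := by
    funext i; fin_cases i <;> simp [rotA, Pi.smul_apply, smul_eq_mul] <;> ring

lemma rotA_smul (α β t c : ℝ) (u : V4) :
    rotA α β t (c • u) = c • rotA α β t u := map_smul (rotL α β t) c u

lemma rotA_sub (α β t : ℝ) (u v : V4) :
    rotA α β t (u - v) = rotA α β t u - rotA α β t v := map_sub (rotL α β t) u v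

lemma rotA_sum {ι : Type*} (α β t : ℝ) (s : Finset ι) (f : ι → V4) :
    rotA α β t (∑ j ∈ s, f j) = ∑ j ∈ s, rotA α β t (f j) := map_sum (rotL α β t) f s

lemma dot4_rotA (α β t : ℝ) (u v : V4) :
    dot4 (rotA α β t u) (rotA α β t v) = dot4 u v := by
  simp only [dot4, rotA, Matrix.cons_val_zero, Matrix.cons_val_one, Matrix.head_cons,
    Matrix.cons_val_two, Matrix.tail_cons, Matrix.cons_val_three]
  linear_combination (u 0 * v 0 + u 1 * v 1) * Real.sin_sq_add_cos_sq (α*t) +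
    (u 2 * v 2 + u 3 * v 3) * Real.sin_sq_add_cos_sq (β*t)

lemma rotA_inj (α β t : ℝ) {u v : V4} (h : rotA α β t u = rotA α β t v) : u = v := by
  have h0 : rotA α β t (u - v) = 0 := by rw [rotA_sub, h, sub_self]
  have hd : dot4 (u - v) (u - v) = 0 := by
    rw [← dot4_rotA α β t, h0]; simp [dot4]
  simp only [dot4, Pi.sub_apply] at hd
  have h0' : u 0 - v 0 = 0 := by nlinarith [sq_nonneg (u 0 - v 0), sq_nonneg (u 1 - v 1), sq_nonneg (u 2 - v 2), sq_nonneg (u 3 - v 3)]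
  have h1' : u 1 - v 1 = 0 := by nlinarith [sq_nonneg (u 0 - v 0), sq_nonneg (u 1 - v 1), sq_nonneg (u 2 - v 2), sq_nonneg (u 3 - v 3)]
  have h2' : u 2 - v 2 = 0 := by nlinarith [sq_nonneg (u 0 - v 0), sq_nonneg (u 1 - v 1), sq_nonneg (u 2 - v 2), sq_nonneg (u 3 - v 3)]
  have h3' : u 3 - v 3 = 0 := by nlinarith [sq_nonneg (u 0 - v 0), sq_nonneg (u 1 - v 1), sq_nonneg (u 2 - v 2), sq_nonneg (u 3 - v 3)]
  funext i
  fin_cases i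
  · show u 0 = v 0; linarith
  · show u 1 = v 1; linarith
  · show u 2 = v 2; linarith
  · show u 3 = v 3; linarith

lemma gradUS_rotA {N : ℕ} (m : Fin N → ℝ) (q : Fin N → V4) (i : Fin N) (α β t : ℝ) :
    gradUS m (fun j => rotA α β t (q j)) i = rotA α β t (gradUS m q i) := by
  unfold gradUS
  rw [rotA_sum]
  refine Finset.sum_congr rfl fun j hj => ?_
  have hds : dS (rotA α β t (q i)) (rotA α β t (q j)) = dS (q i) (q j) := by
    unfold dS; rw [dot4_rotA]
  rw [rotA_smul, rotA_sub, rotA_smul, hds]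

lemma keyvec (α β mi : ℝ) (p : V4) (hp : p 0 ^ 2 + p 1 ^ 2 + p 2 ^ 2 + p 3 ^ 2 = 1) :
    mi • Jv α β (Jv α β p) =
      (mi * (β ^ 2 - α ^ 2)) •
        ![p 0 * (p 3 ^ 2 + p 2 ^ 2), p 1 * (p 3 ^ 2 + p 2 ^ 2),
          -(p 2 * (p 0 ^ 2 + p 1 ^ 2)), -(p 3 * (p 0 ^ 2 + p 1 ^ 2))] -
      (mi * dot4 (Jv α β p) (Jv α β p)) • p := by
  funext i
  fin_cases i
  · show (mi • Jv α β (Jv α β p)) 0 =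
      ((mi * (β ^ 2 - α ^ 2)) •
        ![p 0 * (p 3 ^ 2 + p 2 ^ 2), p 1 * (p 3 ^ 2 + p 2 ^ 2),
          -(p 2 * (p 0 ^ 2 + p 1 ^ 2)), -(p 3 * (p 0 ^ 2 + p 1 ^ 2))] -
      (mi * dot4 (Jv α β p) (Jv α β p)) • p) 0
    simp only [Jv, dot4, Pi.smul_apply, Pi.sub_apply, Matrix.cons_val_zero, Matrix.cons_val_one,
      Matrix.head_cons, Matrix.cons_val_two, Matrix.tail_cons, Matrix.cons_val_three,
      smul_eq_mul]
    linear_combination (mi * α ^ 2 * p 0) * hp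
  · show (mi • Jv α β (Jv α β p)) 1 =
      ((mi * (β ^ 2 - α ^ 2)) •
        ![p 0 * (p 3 ^ 2 + p 2 ^ 2), p 1 * (p 3 ^ 2 + p 2 ^ 2),
          -(p 2 * (p 0 ^ 2 + p 1 ^ 2)), -(p 3 * (p 0 ^ 2 + p 1 ^ 2))] -
      (mi * dot4 (Jv α β p) (Jv α β p)) • p) 1
    simp only [Jv, dot4, Pi.smul_apply, Pi.sub_apply, Matrix.cons_val_zero, Matrix.cons_val_one,
      Matrix.head_cons, Matrix.cons_val_two, Matrix.tail_cons, Matrix.cons_val_three,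
      smul_eq_mul]
    linear_combination (mi * α ^ 2 * p 1) * hp
  · show (mi • Jv α β (Jv α β p)) 2 =
      ((mi * (β ^ 2 - α ^ 2)) •
        ![p 0 * (p 3 ^ 2 + p 2 ^ 2), p 1 * (p 3 ^ 2 + p 2 ^ 2),
          -(p 2 * (p 0 ^ 2 + p 1 ^ 2)), -(p 3 * (p 0 ^ 2 + p 1 ^ 2))] -
      (mi * dot4 (Jv α β p) (Jv α β p)) • p) 2
    simp only [Jv, dot4, Pi.smul_apply, Pi.sub_apply, Matrix.cons_val_zero, Matrix.cons_val_one,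
      Matrix.head_cons, Matrix.cons_val_two, Matrix.tail_cons, Matrix.cons_val_three,
      smul_eq_mul]
    linear_combination (mi * β ^ 2 * p 2) * hp
  · show (mi • Jv α β (Jv α β p)) 3 =
      ((mi * (β ^ 2 - α ^ 2)) •
        ![p 0 * (p 3 ^ 2 + p 2 ^ 2), p 1 * (p 3 ^ 2 + p 2 ^ 2),
          -(p 2 * (p 0 ^ 2 + p 1 ^ 2)), -(p 3 * (p 0 ^ 2 + p 1 ^ 2))] -
      (mi * dot4 (Jv α β p) (Jv α β p)) • p) 3
    simp only [Jv, dot4, Pi.smul_apply, Pi.sub_apply, Matrix.cons_val_zero, Matrix.cons_val_one,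
      Matrix.head_cons, Matrix.cons_val_two, Matrix.tail_cons, Matrix.cons_val_three,
      smul_eq_mul]
    linear_combination (mi * β ^ 2 * p 3) * hp

lemma eom_iff {N : ℕ} (m : Fin N → ℝ) (q : Fin N → V4) (α β t : ℝ) (i : Fin N) :
    (m i • deriv (deriv (fun s => rotA α β s (q i))) t =
        gradUS m (fun j => rotA α β t (q j)) i -
          (m i * dot4 (deriv (fun s => rotA α β s (q i)) t)
            (deriv (fun s => rotA α β s (q i)) t)) • rotA α β t (q i)) ↔
    (m i • Jv α β (Jv α β (q i)) =
        gradUS m q i - (m i * dot4 (Jv α β (q i)) (Jv α β (q i))) • q i) := by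
  have hd1 : deriv (fun s => rotA α β s (q i)) = fun s => rotA α β s (Jv α β (q i)) :=
    funext fun s => (rotA_hasDeriv α β s (q i)).deriv
  rw [hd1, (rotA_hasDeriv α β t (Jv α β (q i))).deriv, gradUS_rotA, dot4_rotA]
  constructor
  · intro h
    apply rotA_inj α β t
    rw [rotA_smul, rotA_sub, rotA_smul]
    exact h
  · intro h
    rw [← rotA_smul, ← rotA_smul, ← rotA_sub]
    exact congrArg (rotA α β t) h

/-- A rotated curve `A_{α,β}(t)q` is a solution of the equations of motion
in `S³` iff `q` satisfies the relative-equilibrium criterion. -/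
theorem statement0 (N : ℕ) (hN : 2 ≤ N) (m : Fin N → ℝ) (hm : ∀ i, 0 < m i)
    (q : Fin N → V4) (hq : ∀ i, q i ∈ sphere3)
    (hns : ∀ i j, i ≠ j → q i ≠ q j ∧ q i ≠ -q j) (α β : ℝ) :
    (∀ (t : ℝ) (i : Fin N),
      m i • deriv (deriv (fun s => rotA α β s (q i))) t =
        gradUS m (fun j => rotA α β t (q j)) i -
          (m i * dot4 (deriv (fun s => rotA α β s (q i)) t)
            (deriv (fun s => rotA α β s (q i)) t)) • rotA α β t (q i)) ↔
    (∀ i : Fin N,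
      (m i * (β ^ 2 - α ^ 2)) •
        ![q i 0 * (q i 3 ^ 2 + q i 2 ^ 2), q i 1 * (q i 3 ^ 2 + q i 2 ^ 2),
          -(q i 2 * (q i 0 ^ 2 + q i 1 ^ 2)), -(q i 3 * (q i 0 ^ 2 + q i 1 ^ 2))] =
        gradUS m q i) := by
  have hsph : ∀ i : Fin N, q i 0 ^ 2 + q i 1 ^ 2 + q i 2 ^ 2 + q i 3 ^ 2 = 1 := fun i => hq i
  constructor
  · intro h i
    have h0 := (eom_iff m q α β 0 i).mp (h 0 i)
    rw [keyvec α β (m i) (q i) (hsph i)] at h0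
    exact sub_left_inj.mp h0
  · intro h t i
    refine (eom_iff m q α β t i).mpr ?_
    rw [keyvec α β (m i) (q i) (hsph i), h i]
end
end

section
/- Let N ≥ 2, let m₁,…,m_N > 0, and let q = (q₁,…,q_N) be a nonsingular configuration in H³ with qᵢ = (xᵢ,yᵢ,zᵢ,wᵢ). For α,β ∈ ℝ let B_{α,β}(t) be the 4×4 block-diagonal matrix with upper block [[cos αt, −sin αt],[sin αt, cos αt]] acting on (x,y) and lower block [[cosh βt, sinh βt],[sinh βt, cosh βt]] acting on (z,w). Then the curve t ↦ (B_{α,β}(t)q₁,…,B_{α,β}(t)q_N) satisfies, for all t ∈ ℝ and all i, the equations of motion mᵢ q̈ᵢ(t) = ∇_{qᵢ}U(q(t)) + mᵢ (q̇ᵢ(t)⊙q̇ᵢ(t)) qᵢ(t), if and only if for every i one has −mᵢ(α² + β²)·(xᵢ(wᵢ²−zᵢ²), yᵢ(wᵢ²−zᵢ²), zᵢ(xᵢ²+yᵢ²), wᵢ(xᵢ²+yᵢ²)) = ∇_{qᵢ}U(q). -/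
noncomputable section
open Real Finset

lemma rotB_mdot4 (α β t : ℝ) (p r : V4) :
    mdot4 (rotB α β t p) (rotB α β t r) = mdot4 p r := by
  simp only [rotB, mdot4, Matrix.cons_val_zero, Matrix.cons_val_one, Matrix.head_cons,
    Matrix.cons_val_two, Matrix.tail_cons, Matrix.cons_val_three]
  linear_combination (p 0 * r 0 + p 1 * r 1) * Real.sin_sq_add_cos_sq (α * t)
    + (p 2 * r 2 - p 3 * r 3) * Real.cosh_sq_sub_sinh_sq (β * t)

lemma rotB_add (α β t : ℝ) (p r : V4) :
    rotB α β t (p + r) = rotB α β t p + rotB α β t r := by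
  funext k; fin_cases k <;> simp [rotB] <;> ring

lemma rotB_smul (α β t c : ℝ) (p : V4) :
    rotB α β t (c • p) = c • rotB α β t p := by
  funext k; fin_cases k <;> simp [rotB] <;> ring

/-- `rotB` as a linear map. -/
def rotBL (α β t : ℝ) : V4 →ₗ[ℝ] V4 where
  toFun := rotB α β t
  map_add' := rotB_add α β t
  map_smul' c p := rotB_smul α β t c p

lemma dH_rotB (α β t : ℝ) (p r : V4) : dH (rotB α β t p) (rotB α β t r) = dH p r := by
  unfold dH; rw [rotB_mdot4]

lemma gradUH_rotB {N : ℕ} (m : Fin N → ℝ) (q : Fin N → V4) (α β t : ℝ) (i : Fin N) :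
    gradUH m (fun j => rotB α β t (q j)) i = rotB α β t (gradUH m q i) := by
  have hl : rotB α β t = (rotBL α β t : V4 → V4) := rfl
  simp only [gradUH, dH_rotB]
  rw [hl, map_sum]
  exact Finset.sum_congr rfl fun j hj => by rw [map_smul, map_sub, map_smul]

lemma hasDerivAt_rotB (α β : ℝ) (p : V4) (t : ℝ) :
    HasDerivAt (fun s => rotB α β s p)
      (rotB α β t ![-(α * p 1), α * p 0, β * p 3, β * p 2]) t := by
  have hc : HasDerivAt (fun s : ℝ => Real.cos (α * s)) (-Real.sin (α * t) * α) t := by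
    simpa [Function.comp_def] using (Real.hasDerivAt_cos (α * t)).comp t ((hasDerivAt_id t).const_mul α)
  have hs : HasDerivAt (fun s : ℝ => Real.sin (α * s)) (Real.cos (α * t) * α) t := by
    simpa [Function.comp_def] using (Real.hasDerivAt_sin (α * t)).comp t ((hasDerivAt_id t).const_mul α)
  have hch : HasDerivAt (fun s : ℝ => Real.cosh (β * s)) (Real.sinh (β * t) * β) t := by
    simpa [Function.comp_def] using (Real.hasDerivAt_cosh (β * t)).comp t ((hasDerivAt_id t).const_mul β)
  have hsh : HasDerivAt (fun s : ℝ => Real.sinh (β * s)) (Real.cosh (β * t) * β) t := by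
    simpa [Function.comp_def] using (Real.hasDerivAt_sinh (β * t)).comp t ((hasDerivAt_id t).const_mul β)
  rw [hasDerivAt_pi]
  intro k
  fin_cases k
  · show HasDerivAt (fun s => cos (α * s) * p 0 - sin (α * s) * p 1)
      (cos (α * t) * -(α * p 1) - sin (α * t) * (α * p 0)) t
    exact ((hc.mul_const (p 0)).sub (hs.mul_const (p 1))).congr_deriv (by ring)
  · show HasDerivAt (fun s => sin (α * s) * p 0 + cos (α * s) * p 1)
      (sin (α * t) * -(α * p 1) + cos (α * t) * (α * p 0)) t
    exact ((hs.mul_const (p 0)).add (hc.mul_const (p 1))).congr_deriv (by ring)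
  · show HasDerivAt (fun s => cosh (β * s) * p 2 + sinh (β * s) * p 3)
      (cosh (β * t) * (β * p 3) + sinh (β * t) * (β * p 2)) t
    exact ((hch.mul_const (p 2)).add (hsh.mul_const (p 3))).congr_deriv (by ring)
  · show HasDerivAt (fun s => sinh (β * s) * p 2 + cosh (β * s) * p 3)
      (sinh (β * t) * (β * p 3) + cosh (β * t) * (β * p 2)) t
    exact ((hsh.mul_const (p 2)).add (hch.mul_const (p 3))).congr_deriv (by ring)

lemma deriv_rotB (α β : ℝ) (p : V4) (t : ℝ) :
    deriv (fun s => rotB α β s p) t = rotB α β t ![-(α * p 1), α * p 0, β * p 3, β * p 2] :=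
  (hasDerivAt_rotB α β p t).deriv

lemma deriv2_rotB (α β : ℝ) (p : V4) (t : ℝ) :
    deriv (deriv (fun s => rotB α β s p)) t =
      rotB α β t ![-(α ^ 2 * p 0), -(α ^ 2 * p 1), β ^ 2 * p 2, β ^ 2 * p 3] := by
  have h1 : deriv (fun s => rotB α β s p) =
      fun s => rotB α β s ![-(α * p 1), α * p 0, β * p 3, β * p 2] :=
    funext fun s => deriv_rotB α β p s
  rw [h1, deriv_rotB]
  congr 1
  funext k
  fin_cases k <;>
    simp [Matrix.cons_val_zero, Matrix.cons_val_one, Matrix.head_cons,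
      Matrix.cons_val_two, Matrix.tail_cons, Matrix.cons_val_three] <;> ring

lemma rotB_rotB_neg (α β t : ℝ) (p : V4) : rotB α β (-t) (rotB α β t p) = p := by
  funext k
  fin_cases k
  · simp [rotB, mul_neg]
    linear_combination p 0 * Real.sin_sq_add_cos_sq (α * t)
  · simp [rotB, mul_neg]
    linear_combination p 1 * Real.sin_sq_add_cos_sq (α * t)
  · simp [rotB, mul_neg]
    linear_combination p 2 * Real.cosh_sq_sub_sinh_sq (β * t)
  · simp [rotB, mul_neg]
    linear_combination p 3 * Real.cosh_sq_sub_sinh_sq (β * t)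

lemma rotB_injective (α β t : ℝ) : Function.Injective (rotB α β t) := fun p r h => by
  rw [← rotB_rotB_neg α β t p, h, rotB_rotB_neg]

lemma vec_identity (mi α β : ℝ) (p : V4)
    (hp : p 0 ^ 2 + p 1 ^ 2 + p 2 ^ 2 - p 3 ^ 2 = -1) :
    (-(mi * (α ^ 2 + β ^ 2))) • (![p 0 * (p 3 ^ 2 - p 2 ^ 2), p 1 * (p 3 ^ 2 - p 2 ^ 2),
        p 2 * (p 0 ^ 2 + p 1 ^ 2), p 3 * (p 0 ^ 2 + p 1 ^ 2)] : V4) =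
      mi • (![-(α ^ 2 * p 0), -(α ^ 2 * p 1), β ^ 2 * p 2, β ^ 2 * p 3] : V4) -
        (mi * mdot4 ![-(α * p 1), α * p 0, β * p 3, β * p 2]
          ![-(α * p 1), α * p 0, β * p 3, β * p 2]) • p := by
  funext k
  fin_cases k
  · simp [mdot4]
    linear_combination (mi * α ^ 2 * p 0) * hp
  · simp [mdot4]
    linear_combination (mi * α ^ 2 * p 1) * hp
  · simp [mdot4]
    linear_combination (-(mi * β ^ 2 * p 2)) * hp
  · simp [mdot4]
    linear_combination (-(mi * β ^ 2 * p 3)) * hp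

/-- A transformed curve `B_{α,β}(t)q` is a solution of the equations of motion
in `H³` iff `q` satisfies the relative-equilibrium criterion. -/
theorem statement1 (N : ℕ) (hN : 2 ≤ N) (m : Fin N → ℝ) (hm : ∀ i, 0 < m i)
    (q : Fin N → V4) (hq : ∀ i, q i ∈ hyper3)
    (hns : ∀ i j, i ≠ j → q i ≠ q j) (α β : ℝ) :
    (∀ (t : ℝ) (i : Fin N),
      m i • deriv (deriv (fun s => rotB α β s (q i))) t =
        gradUH m (fun j => rotB α β t (q j)) i +
          (m i * mdot4 (deriv (fun s => rotB α β s (q i)) t)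
            (deriv (fun s => rotB α β s (q i)) t)) • rotB α β t (q i)) ↔
    (∀ i : Fin N,
      (-(m i * (α ^ 2 + β ^ 2))) •
        ![q i 0 * (q i 3 ^ 2 - q i 2 ^ 2), q i 1 * (q i 3 ^ 2 - q i 2 ^ 2),
          q i 2 * (q i 0 ^ 2 + q i 1 ^ 2), q i 3 * (q i 0 ^ 2 + q i 1 ^ 2)] =
        gradUH m q i) := by
  have key : ∀ (t : ℝ) (i : Fin N),
      (m i • deriv (deriv (fun s => rotB α β s (q i))) t =
        gradUH m (fun j => rotB α β t (q j)) i +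
          (m i * mdot4 (deriv (fun s => rotB α β s (q i)) t)
            (deriv (fun s => rotB α β s (q i)) t)) • rotB α β t (q i)) ↔
      (m i • (![-(α ^ 2 * q i 0), -(α ^ 2 * q i 1), β ^ 2 * q i 2, β ^ 2 * q i 3] : V4) =
        gradUH m q i +
          (m i * mdot4 ![-(α * q i 1), α * q i 0, β * q i 3, β * q i 2]
            ![-(α * q i 1), α * q i 0, β * q i 3, β * q i 2]) • q i) := by
    intro t i
    rw [deriv2_rotB, deriv_rotB, gradUH_rotB, rotB_mdot4, ← rotB_smul, ← rotB_smul,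
      ← rotB_add]
    exact ⟨fun h => rotB_injective α β t h, fun h => congrArg (rotB α β t) h⟩
  constructor
  · intro h i
    rw [vec_identity (m i) α β (q i) (hq i).1, sub_eq_iff_eq_add]
    exact (key 0 i).mp (h 0 i)
  · intro h t i
    refine (key t i).mpr ?_
    rw [← sub_eq_iff_eq_add, ← vec_identity (m i) α β (q i) (hq i).1]
    exact h i
end
end

section
/- Let σ ∈ {1,−1} and let M³ = {(x,y,z,w) ∈ ℝ⁴ : x²+y²+z²+σw² = σ, with w > 0 if σ = −1}. Let a,b,c,d ∈ ℝ and suppose the set S = {(x,y,z,w) ∈ M³ : ax+by+cz+dw = 0} is nonempty and every (x,y,z,w) ∈ S satisfies (ax+by)(w²+σz²) = (cz+dw)(x²+y²). Then (a,b) = (0,0) or (c,d) = (0,0). -/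
noncomputable section
open Real Finset

lemma auxS (a b c d : ℝ) (hab : 0 < a^2+b^2) (hcd : 0 < c^2+d^2) :
    ∃ x y z w : ℝ, x^2+y^2+z^2+w^2 = 1 ∧ a*x+b*y+c*z+d*w = 0 ∧ c*z+d*w ≠ 0 := by
  set r := Real.sqrt (a^2+b^2) with hrdef
  set q := Real.sqrt (c^2+d^2) with hqdef
  set n := Real.sqrt (a^2+b^2+c^2+d^2) with hndef
  have hr : r^2 = a^2+b^2 := Real.sq_sqrt hab.le
  have hq : q^2 = c^2+d^2 := Real.sq_sqrt hcd.le
  have hn : n^2 = a^2+b^2+c^2+d^2 := Real.sq_sqrt (by linarith)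
  have hr0 : 0 < r := Real.sqrt_pos.mpr hab
  have hq0 : 0 < q := Real.sqrt_pos.mpr hcd
  have hn0 : 0 < n := Real.sqrt_pos.mpr (by linarith)
  refine ⟨q*a/(n*r), q*b/(n*r), -(r*c)/(n*q), -(r*d)/(n*q), ?_, ?_, ?_⟩
  · field_simp
    linear_combination (q^2*r^2 - q^4) * hr + (q^2*r^2 - r^4) * hq
      - q^2*r^2 * hn
  · field_simp
    linear_combination (-(q^2))*hr + r^2*hq
  · have he : c * (-(r*c)/(n*q)) + d * (-(r*d)/(n*q)) = -(r*q/n) := by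
      field_simp
      linear_combination hq
    rw [he]
    have hp : 0 < r*q/n := by positivity
    intro hz
    linarith


lemma auxH (a b c d : ℝ) (hab : 0 < a^2+b^2) (hcd : 0 < c^2+d^2)
    (hlt : d^2 < a^2+b^2+c^2) :
    ∃ x y z w : ℝ, x^2+y^2+z^2-w^2 = -1 ∧ 0 < w ∧ a*x+b*y+c*z+d*w = 0 ∧ c*z+d*w ≠ 0 := by
  set R := Real.sqrt (a^2+b^2) with hRdef
  have hR : R^2 = a^2+b^2 := Real.sq_sqrt hab.le
  have hR0 : 0 < R := Real.sqrt_pos.mpr hab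
  obtain ⟨L, H, hL0, hH0, hHR, hEq⟩ : ∃ L H : ℝ, 0 < L ∧ 0 < H^2 ∧ H^2 < R^2 ∧
      (c+d)*L^2 + (d-c) = 2*(H*L) := by
    rcases eq_or_ne (c+d) 0 with hP | hP
    · have hc : c ≠ 0 := by
        intro h0
        have hd : d = 0 := by linarith
        rw [h0, hd] at hcd; norm_num at hcd
      have hlc0 : 0 < Real.sqrt (c^2) := Real.sqrt_pos.mpr (by positivity)
      have hlc2 : (Real.sqrt (c^2))^2 = c^2 := Real.sq_sqrt (by positivity)
      set lc := Real.sqrt (c^2)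
      refine ⟨2*lc/R, -(c*R)/(2*lc), by positivity, ?_, ?_, ?_⟩
      · have : (-(c*R)/(2*lc))^2 = R^2/4 := by
          field_simp
          linear_combination (-4) * hlc2
        rw [this]; positivity
      · have : (-(c*R)/(2*lc))^2 = R^2/4 := by
          field_simp
          linear_combination (-4) * hlc2
        rw [this]; nlinarith [hR0]
      · rw [hP]
        have hd : d = -c := by linarith
        rw [hd]
        field_simp
        ring
    · set D := d^2 - c^2 with hDdef
      have hg0 : 0 < Real.sqrt ((c+d)^2) := Real.sqrt_pos.mpr (by positivity)
      have hg2 : (Real.sqrt ((c+d)^2))^2 = (c+d)^2 := Real.sq_sqrt (by positivity)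
      set g := Real.sqrt ((c+d)^2)
      set e2 := (max D 0 + R^2)/2 with he2def
      have hmax0 : (0:ℝ) ≤ max D 0 := le_max_right _ _
      have hmaxD : D ≤ max D 0 := le_max_left _ _
      have hDR : D < R^2 := by rw [hR, hDdef]; linarith
      have he20 : 0 < e2 := by rw [he2def]; nlinarith
      have he2R : e2 < R^2 := by
        have : max D 0 < R^2 := max_lt hDR (by positivity)
        rw [he2def]; linarith
      have he2D : D < e2 := by rw [he2def]; linarith
      have hu0 : 0 < Real.sqrt e2 := Real.sqrt_pos.mpr he20
      have hu2 : (Real.sqrt e2)^2 = e2 := Real.sq_sqrt he20.le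
      have hv0 : 0 < Real.sqrt (e2 - D) := Real.sqrt_pos.mpr (by linarith)
      have hv2 : (Real.sqrt (e2 - D))^2 = e2 - D := Real.sq_sqrt (by linarith)
      set u := Real.sqrt e2
      set v := Real.sqrt (e2 - D)
      refine ⟨(u+v)/g, (c+d)*u/g, by positivity, ?_, ?_, ?_⟩
      · have : ((c+d)*u/g)^2 = e2 := by
          rw [div_pow, mul_pow, hg2, ← hu2]
          field_simp
        rw [this]; exact he20
      · have : ((c+d)*u/g)^2 = e2 := by
          rw [div_pow, mul_pow, hg2, ← hu2]
          field_simp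
        rw [this]; exact he2R
      · field_simp
        linear_combination (d-c)*hg2 - (c+d)*hu2 + (c+d)*hv2 - (c+d)*hDdef
  set s2 := H^2/(R^2 - H^2) with hs2def
  have hs20 : 0 < s2 := div_pos hH0 (by linarith)
  have hk0 : 0 < Real.sqrt (1 + s2) := Real.sqrt_pos.mpr (by linarith)
  have hk2 : (Real.sqrt (1 + s2))^2 = 1 + s2 := Real.sq_sqrt (by linarith)
  set k := Real.sqrt (1 + s2)
  have hkey : k^2*(R^2 - H^2) = R^2 := by
    have hden : R^2 - H^2 > 0 := by linarith
    rw [hk2, hs2def]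
    field_simp
    ring
  have hH : H ≠ 0 := by intro h0; rw [h0] at hH0; norm_num at hH0
  refine ⟨-(k*H)*a/R^2, -(k*H)*b/R^2, k*(L^2-1)/(2*L), k*(L^2+1)/(2*L), ?_, ?_, ?_, ?_⟩
  · have hxy2 : (-(k*H)*a/R^2)^2 + (-(k*H)*b/R^2)^2 = k^2*H^2/R^2 := by
      field_simp
      linear_combination (-1) * hR
    have hzw2 : (k*(L^2-1)/(2*L))^2 - (k*(L^2+1)/(2*L))^2 = -(k^2) := by
      field_simp
      ring
    have haux : k^2*H^2/R^2 - k^2 = -1 := by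
      field_simp
      linear_combination -hkey
    linear_combination hxy2 + hzw2 + haux
  · positivity
  · have hxy : a*(-(k*H)*a/R^2) + b*(-(k*H)*b/R^2) = -(k*H) := by
      field_simp
      linear_combination hR
    have hzw : c*(k*(L^2-1)/(2*L)) + d*(k*(L^2+1)/(2*L)) = k*H := by
      field_simp
      linear_combination hEq
    linear_combination hxy + hzw
  · have hzw : c*(k*(L^2-1)/(2*L)) + d*(k*(L^2+1)/(2*L)) = k*H := by
      field_simp
      linear_combination hEq
    rw [hzw]
    exact mul_ne_zero (ne_of_gt hk0) hH

lemma sq_sum_pos' {a b : ℝ} (h : ¬(a = 0 ∧ b = 0)) : 0 < a^2 + b^2 := by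
  rcases eq_or_ne a 0 with ha | ha
  · rcases eq_or_ne b 0 with hb | hb
    · exact absurd ⟨ha, hb⟩ h
    · have := pow_two_pos_of_ne_zero hb
      nlinarith [sq_nonneg a]
  · have := pow_two_pos_of_ne_zero ha
    nlinarith [sq_nonneg b]

/-- If the gradient of `x²+y²` is everywhere tangent to the hyperplane
section `{ax+by+cz+dw = 0}` of `M³`, then `(a,b) = 0` or `(c,d) = 0`. -/
theorem statement5 (σ : ℝ) (hσ : σ = 1 ∨ σ = -1) (a b c d : ℝ)
    (hne : ∃ p : V4, (p 0 ^ 2 + p 1 ^ 2 + p 2 ^ 2 + σ * p 3 ^ 2 = σ ∧ (σ = -1 → 0 < p 3)) ∧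
      a * p 0 + b * p 1 + c * p 2 + d * p 3 = 0)
    (h : ∀ p : V4, (p 0 ^ 2 + p 1 ^ 2 + p 2 ^ 2 + σ * p 3 ^ 2 = σ ∧ (σ = -1 → 0 < p 3)) →
      a * p 0 + b * p 1 + c * p 2 + d * p 3 = 0 →
      (a * p 0 + b * p 1) * (p 3 ^ 2 + σ * p 2 ^ 2) =
        (c * p 2 + d * p 3) * (p 0 ^ 2 + p 1 ^ 2)) :
    (a = 0 ∧ b = 0) ∨ (c = 0 ∧ d = 0) := by
  by_contra hcon
  push_neg at hcon
  obtain ⟨h1, h2⟩ := hcon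
  have hab : 0 < a^2 + b^2 := sq_sum_pos' (fun hh => h1 hh.1 hh.2)
  have hcd : 0 < c^2 + d^2 := sq_sum_pos' (fun hh => h2 hh.1 hh.2)
  rcases hσ with h1σ | h1σ
  · subst h1σ
    obtain ⟨x, y, z, w, hmem, hpl, hne'⟩ := auxS a b c d hab hcd
    have key' : (a*x+b*y)*(w^2 + 1*z^2) = (c*z+d*w)*(x^2+y^2) :=
      h ![x,y,z,w]
        ⟨by show x^2+y^2+z^2+1*w^2 = 1; linarith, fun hc => absurd hc (by norm_num)⟩
        (by show a*x+b*y+c*z+d*w = 0; exact hpl)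
    have h5 : (c*z+d*w) * (x^2+y^2+w^2+z^2) = 0 := by
      linear_combination (w^2+z^2)*hpl - key'
    have h6 : x^2+y^2+w^2+z^2 = 1 := by linarith
    rw [h6, mul_one] at h5
    exact hne' h5
  · subst h1σ
    obtain ⟨p0, ⟨hm0, hw0f⟩, hpl0⟩ := hne
    have hw0 : 0 < p0 3 := hw0f rfl
    have hsq : (a*p0 0 + b*p0 1 + c*p0 2)^2 = d^2 * (p0 3)^2 := by
      linear_combination (a*p0 0 + b*p0 1 + c*p0 2 - d*p0 3) * hpl0
    have hlt : d^2 < a^2 + b^2 + c^2 := by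
      nlinarith [hsq, hm0, hab, mul_pos hw0 hw0, sq_nonneg (a*p0 1 - b*p0 0),
        sq_nonneg (a*p0 2 - c*p0 0), sq_nonneg (b*p0 2 - c*p0 1)]
    obtain ⟨x, y, z, w, hmem, hw, hpl, hne'⟩ := auxH a b c d hab hcd hlt
    have key' : (a*x+b*y)*(w^2 + (-1)*z^2) = (c*z+d*w)*(x^2+y^2) :=
      h ![x,y,z,w]
        ⟨by show x^2+y^2+z^2+(-1)*w^2 = -1; linarith, fun _ => by show (0:ℝ) < w; exact hw⟩
        (by show a*x+b*y+c*z+d*w = 0; exact hpl)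
    have h5 : (c*z+d*w) * (x^2+y^2+w^2-z^2) = 0 := by
      linear_combination (w^2-z^2)*hpl - key'
    have h6 : 0 < x^2+y^2+w^2-z^2 := by nlinarith [sq_nonneg x, sq_nonneg y]
    rcases mul_eq_zero.mp h5 with h7 | h7
    · exact hne' h7
    · linarith
end
end

section
/- Let N ≥ 2, m₁,…,m_N > 0, and let q = (q₁,…,q_N) be a nonsingular configuration in S³. Then there exists λ ∈ ℝ with ∇_{qᵢ}U(q) = λ∇_{qᵢ}I(q) for all i if and only if the following hold: (a) for every i with qᵢ ∈ S¹_xy ∪ S¹_zw, ∇_{qᵢ}U(q) = 0; and (b) there exists λ ∈ ℝ such that for every i with qᵢ ∉ S¹_xy ∪ S¹_zw one has Σ_{j≠i} mⱼ(xᵢxⱼ + yᵢyⱼ − rᵢ² cos d_ij)/sin³ d_ij = 2λ rᵢ²ρᵢ², Σ_{j≠i} mⱼ(xᵢyⱼ − xⱼyᵢ)/sin³ d_ij = 0, and Σ_{j≠i} mⱼ(zᵢwⱼ − zⱼwᵢ)/sin³ d_ij = 0. -/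
noncomputable section
open Real Finset

lemma cos_dS_eq {p r : V4} (hp : p ∈ sphere3) (hr : r ∈ sphere3) :
    Real.cos (dS p r) = dot4 p r := by
  have hp' : p 0 ^ 2 + p 1 ^ 2 + p 2 ^ 2 + p 3 ^ 2 = 1 := hp
  have hr' : r 0 ^ 2 + r 1 ^ 2 + r 2 ^ 2 + r 3 ^ 2 = 1 := hr
  unfold dS
  apply Real.cos_arccos
  · unfold dot4
    nlinarith [sq_nonneg (p 0 + r 0), sq_nonneg (p 1 + r 1), sq_nonneg (p 2 + r 2),
      sq_nonneg (p 3 + r 3)]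
  · unfold dot4
    nlinarith [sq_nonneg (p 0 - r 0), sq_nonneg (p 1 - r 1), sq_nonneg (p 2 - r 2),
      sq_nonneg (p 3 - r 3)]

lemma gradUS_apply {N : ℕ} (m : Fin N → ℝ) (q : Fin N → V4) (i : Fin N) (k : Fin 4) :
    gradUS m q i k = ∑ j ∈ Finset.univ.erase i,
      (m i * m j / (Real.sin (dS (q i) (q j))) ^ 3) *
        (q j k - Real.cos (dS (q i) (q j)) * q i k) := by
  unfold gradUS
  rw [Finset.sum_apply]
  simp [Pi.smul_apply, Pi.sub_apply, smul_eq_mul]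

lemma gradUS_orth {N : ℕ} (m : Fin N → ℝ) (q : Fin N → V4) (hq : ∀ i, q i ∈ sphere3)
    (i : Fin N) :
    q i 0 * gradUS m q i 0 + q i 1 * gradUS m q i 1 + q i 2 * gradUS m q i 2 +
      q i 3 * gradUS m q i 3 = 0 := by
  simp only [gradUS_apply, Finset.mul_sum]
  rw [← Finset.sum_add_distrib, ← Finset.sum_add_distrib, ← Finset.sum_add_distrib]
  apply Finset.sum_eq_zero
  intro j hj
  have hc := cos_dS_eq (hq i) (hq j)
  have hd : q i 0 ^ 2 + q i 1 ^ 2 + q i 2 ^ 2 + q i 3 ^ 2 = 1 := hq i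
  unfold dot4 at hc
  rw [hc]
  linear_combination (-(m i * m j / Real.sin (dS (q i) (q j)) ^ 3 *
    (q i 0 * q j 0 + q i 1 * q j 1 + q i 2 * q j 2 + q i 3 * q j 3))) * hd

lemma sumXY {N : ℕ} (m : Fin N → ℝ) (q : Fin N → V4) (i : Fin N) :
    q i 0 * gradUS m q i 0 + q i 1 * gradUS m q i 1 =
      m i * ∑ j ∈ Finset.univ.erase i,
        m j * (q i 0 * q j 0 + q i 1 * q j 1 -
          (q i 0 ^ 2 + q i 1 ^ 2) * Real.cos (dS (q i) (q j))) /
        (Real.sin (dS (q i) (q j))) ^ 3 := by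
  simp only [gradUS_apply, Finset.mul_sum]
  rw [← Finset.sum_add_distrib]
  apply Finset.sum_congr rfl
  intro j hj
  ring

lemma sumXYrot {N : ℕ} (m : Fin N → ℝ) (q : Fin N → V4) (i : Fin N) :
    q i 0 * gradUS m q i 1 - q i 1 * gradUS m q i 0 =
      m i * ∑ j ∈ Finset.univ.erase i,
        m j * (q i 0 * q j 1 - q j 0 * q i 1) / (Real.sin (dS (q i) (q j))) ^ 3 := by
  simp only [gradUS_apply, Finset.mul_sum]
  rw [← Finset.sum_sub_distrib]
  apply Finset.sum_congr rfl
  intro j hj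
  ring

lemma sumZWrot {N : ℕ} (m : Fin N → ℝ) (q : Fin N → V4) (i : Fin N) :
    q i 2 * gradUS m q i 3 - q i 3 * gradUS m q i 2 =
      m i * ∑ j ∈ Finset.univ.erase i,
        m j * (q i 2 * q j 3 - q j 2 * q i 3) / (Real.sin (dS (q i) (q j))) ^ 3 := by
  simp only [gradUS_apply, Finset.mul_sum]
  rw [← Finset.sum_sub_distrib]
  apply Finset.sum_congr rfl
  intro j hj
  ring

lemma gradIS_zero_of_circle {N : ℕ} (m : Fin N → ℝ) (q : Fin N → V4) (i : Fin N)
    (hi : q i ∈ S1xy ∪ S1zw) : gradIS m q i = 0 := by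
  rcases hi with h | h
  · obtain ⟨_, h2, h3⟩ := h
    funext k; fin_cases k <;> simp [gradIS, h2, h3]
  · obtain ⟨_, h0, h1⟩ := h
    funext k; fin_cases k <;> simp [gradIS, h0, h1]

lemma gradIS0 {N : ℕ} (m : Fin N → ℝ) (q : Fin N → V4) (i : Fin N) :
    gradIS m q i 0 = 2 * m i * (q i 0 * (q i 2 ^ 2 + q i 3 ^ 2)) := by
  simp [gradIS]

lemma gradIS1 {N : ℕ} (m : Fin N → ℝ) (q : Fin N → V4) (i : Fin N) :
    gradIS m q i 1 = 2 * m i * (q i 1 * (q i 2 ^ 2 + q i 3 ^ 2)) := by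
  simp [gradIS]

lemma gradIS2 {N : ℕ} (m : Fin N → ℝ) (q : Fin N → V4) (i : Fin N) :
    gradIS m q i 2 = -(2 * m i * (q i 2 * (q i 0 ^ 2 + q i 1 ^ 2))) := by
  simp [gradIS]

lemma gradIS3 {N : ℕ} (m : Fin N → ℝ) (q : Fin N → V4) (i : Fin N) :
    gradIS m q i 3 = -(2 * m i * (q i 3 * (q i 0 ^ 2 + q i 1 ^ 2))) := by
  simp [gradIS]

/-- Criterion for central configurations in `S³`. -/
theorem statement6 (N : ℕ) (hN : 2 ≤ N) (m : Fin N → ℝ) (hm : ∀ i, 0 < m i)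
    (q : Fin N → V4) (hq : ∀ i, q i ∈ sphere3)
    (hns : ∀ i j, i ≠ j → q i ≠ q j ∧ q i ≠ -q j) :
    (∃ lam : ℝ, ∀ i, gradUS m q i = lam • gradIS m q i) ↔
    ((∀ i, q i ∈ S1xy ∪ S1zw → gradUS m q i = 0) ∧
      ∃ lam : ℝ, ∀ i, q i ∉ S1xy ∪ S1zw →
        (∑ j ∈ Finset.univ.erase i,
            m j * (q i 0 * q j 0 + q i 1 * q j 1 -
              (q i 0 ^ 2 + q i 1 ^ 2) * Real.cos (dS (q i) (q j))) /
            (Real.sin (dS (q i) (q j))) ^ 3 =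
          2 * lam * (q i 0 ^ 2 + q i 1 ^ 2) * (q i 2 ^ 2 + q i 3 ^ 2)) ∧
        (∑ j ∈ Finset.univ.erase i,
            m j * (q i 0 * q j 1 - q j 0 * q i 1) / (Real.sin (dS (q i) (q j))) ^ 3 = 0) ∧
        (∑ j ∈ Finset.univ.erase i,
            m j * (q i 2 * q j 3 - q j 2 * q i 3) / (Real.sin (dS (q i) (q j))) ^ 3 = 0)) := by
  constructor
  · rintro ⟨lam, hlam⟩
    refine ⟨fun i hi => ?_, lam, fun i hi => ?_⟩
    · rw [hlam i, gradIS_zero_of_circle m q i hi, smul_zero]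
    · have hc : ∀ k, gradUS m q i k = lam * gradIS m q i k := fun k => by
        rw [hlam i]; rfl
      refine ⟨?_, ?_, ?_⟩
      · apply mul_left_cancel₀ (hm i).ne'
        rw [← sumXY m q i, hc 0, hc 1, gradIS0, gradIS1]
        ring
      · have h2 : m i * (∑ j ∈ Finset.univ.erase i,
            m j * (q i 0 * q j 1 - q j 0 * q i 1) / (Real.sin (dS (q i) (q j))) ^ 3) = 0 := by
          rw [← sumXYrot m q i, hc 0, hc 1, gradIS0, gradIS1]
          ring
        exact (mul_eq_zero.mp h2).resolve_left (hm i).ne'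
      · have h3 : m i * (∑ j ∈ Finset.univ.erase i,
            m j * (q i 2 * q j 3 - q j 2 * q i 3) / (Real.sin (dS (q i) (q j))) ^ 3) = 0 := by
          rw [← sumZWrot m q i, hc 2, hc 3, gradIS2, gradIS3]
          ring
        exact (mul_eq_zero.mp h3).resolve_left (hm i).ne'
  · rintro ⟨hcirc, lam, hnc⟩
    refine ⟨lam, fun i => ?_⟩
    by_cases hi : q i ∈ S1xy ∪ S1zw
    · rw [hcirc i hi, gradIS_zero_of_circle m q i hi, smul_zero]
    · have hsph : q i 0 ^ 2 + q i 1 ^ 2 + q i 2 ^ 2 + q i 3 ^ 2 = 1 := hq i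
      have hr2 : q i 0 ^ 2 + q i 1 ^ 2 ≠ 0 := by
        intro h
        apply hi; right
        have hx : q i 0 = 0 := by nlinarith [sq_nonneg (q i 0), sq_nonneg (q i 1)]
        have hy : q i 1 = 0 := by nlinarith [sq_nonneg (q i 0), sq_nonneg (q i 1)]
        exact ⟨by linarith, hx, hy⟩
      have hp2 : q i 2 ^ 2 + q i 3 ^ 2 ≠ 0 := by
        intro h
        apply hi; left
        have hz : q i 2 = 0 := by nlinarith [sq_nonneg (q i 2), sq_nonneg (q i 3)]
        have hw : q i 3 = 0 := by nlinarith [sq_nonneg (q i 2), sq_nonneg (q i 3)]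
        exact ⟨by linarith, hz, hw⟩
      obtain ⟨h1, h2, h3⟩ := hnc i hi
      have HA : q i 0 * gradUS m q i 0 + q i 1 * gradUS m q i 1 =
          m i * (2 * lam * (q i 0 ^ 2 + q i 1 ^ 2) * (q i 2 ^ 2 + q i 3 ^ 2)) := by
        rw [sumXY m q i, h1]
      have HB : q i 0 * gradUS m q i 1 - q i 1 * gradUS m q i 0 = 0 := by
        rw [sumXYrot m q i, h2, mul_zero]
      have HC : q i 2 * gradUS m q i 3 - q i 3 * gradUS m q i 2 = 0 := by
        rw [sumZWrot m q i, h3, mul_zero]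
      have HO := gradUS_orth m q hq i
      have e0 : gradUS m q i 0 = lam * gradIS m q i 0 := by
        rw [gradIS0]
        apply mul_left_cancel₀ hr2
        linear_combination (q i 0) * HA - (q i 1) * HB
      have e1 : gradUS m q i 1 = lam * gradIS m q i 1 := by
        rw [gradIS1]
        apply mul_left_cancel₀ hr2
        linear_combination (q i 1) * HA + (q i 0) * HB
      have e2 : gradUS m q i 2 = lam * gradIS m q i 2 := by
        rw [gradIS2]
        apply mul_left_cancel₀ hp2
        linear_combination (q i 2) * HO - (q i 2) * HA - (q i 3) * HC
      have e3 : gradUS m q i 3 = lam * gradIS m q i 3 := by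
        rw [gradIS3]
        apply mul_left_cancel₀ hp2
        linear_combination (q i 3) * HO - (q i 3) * HA + (q i 2) * HC
      funext k
      fin_cases k
      · exact e0
      · exact e1
      · exact e2
      · exact e3
end
end

section
/- Let N ≥ 2, m₁,…,m_N > 0, and let q = (q₁,…,q_N) be a nonsingular configuration in H³. Then there exists λ ∈ ℝ with ∇_{qᵢ}U(q) = λ∇_{qᵢ}I(q) for all i if and only if the following hold: (a) for every i with qᵢ ∈ H¹_zw, ∇_{qᵢ}U(q) = 0; and (b) there exists λ ∈ ℝ such that for every i with qᵢ ∉ H¹_zw one has Σ_{j≠i} mⱼ(xᵢxⱼ + yᵢyⱼ − rᵢ² cosh d_ij)/sinh³ d_ij = 2λ rᵢ²ρᵢ², Σ_{j≠i} mⱼ(xᵢyⱼ − xⱼyᵢ)/sinh³ d_ij = 0, and Σ_{j≠i} mⱼ(zᵢwⱼ − zⱼwᵢ)/sinh³ d_ij = 0. -/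
noncomputable section
open Real Finset

/-! ### Auxiliary lemmas -/

lemma my_cosh_arcosh {x : ℝ} (hx : 1 ≤ x) : Real.cosh (_root_.arcosh x) = x := by
  have h1 : (0:ℝ) ≤ x^2 - 1 := by nlinarith
  have hs : Real.sqrt (x^2-1) ^ 2 = x^2 - 1 := Real.sq_sqrt h1
  have hs0 : 0 ≤ Real.sqrt (x^2-1) := Real.sqrt_nonneg _
  have hpos : 0 < x + Real.sqrt (x^2-1) := by nlinarith
  rw [_root_.arcosh, Real.cosh_eq, Real.exp_log hpos, Real.exp_neg, Real.exp_log hpos]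
  field_simp
  nlinarith [hs]

lemma one_le_neg_mdot {p r : V4} (hp : p ∈ hyper3) (hr : r ∈ hyper3) : 1 ≤ -mdot4 p r := by
  obtain ⟨hp1, hp2⟩ := hp
  obtain ⟨hr1, hr2⟩ := hr
  have hp3 : 1 ≤ p 3 := by nlinarith [sq_nonneg (p 0), sq_nonneg (p 1), sq_nonneg (p 2)]
  have hr3 : 1 ≤ r 3 := by nlinarith [sq_nonneg (r 0), sq_nonneg (r 1), sq_nonneg (r 2)]
  have hC : (p 0 * r 0 + p 1 * r 1 + p 2 * r 2)^2 ≤ (p 3^2 - 1) * (r 3^2 - 1) := by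
    nlinarith [sq_nonneg (p 0 * r 1 - r 0 * p 1), sq_nonneg (p 0 * r 2 - r 0 * p 2),
      sq_nonneg (p 1 * r 2 - r 1 * p 2)]
  have h2 : (p 3^2 - 1) * (r 3^2 - 1) ≤ (p 3 * r 3 - 1)^2 := by nlinarith [sq_nonneg (p 3 - r 3)]
  have h3 : 0 ≤ p 3 * r 3 - 1 := by nlinarith
  simp only [mdot4]
  nlinarith [hC, h2, h3]

lemma cosh_dH {p r : V4} (hp : p ∈ hyper3) (hr : r ∈ hyper3) :
    Real.cosh (dH p r) = -(mdot4 p r) := my_cosh_arcosh (one_le_neg_mdot hp hr)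

lemma gradUH_apply {N : ℕ} (m : Fin N → ℝ) (q : Fin N → V4) (i : Fin N) (k : Fin 4) :
    gradUH m q i k = ∑ j ∈ Finset.univ.erase i,
      (m i * m j / (Real.sinh (dH (q i) (q j))) ^ 3) *
        (q j k - Real.cosh (dH (q i) (q j)) * q i k) := by
  simp [gradUH, Finset.sum_apply]

lemma gradIH0 {N : ℕ} (m : Fin N → ℝ) (q : Fin N → V4) (i : Fin N) :
    gradIH m q i 0 = 2 * m i * (q i 0 * (q i 3 ^ 2 - q i 2 ^ 2)) := by simp [gradIH]
lemma gradIH1 {N : ℕ} (m : Fin N → ℝ) (q : Fin N → V4) (i : Fin N) :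
    gradIH m q i 1 = 2 * m i * (q i 1 * (q i 3 ^ 2 - q i 2 ^ 2)) := by simp [gradIH]
lemma gradIH2 {N : ℕ} (m : Fin N → ℝ) (q : Fin N → V4) (i : Fin N) :
    gradIH m q i 2 = 2 * m i * (q i 2 * (q i 0 ^ 2 + q i 1 ^ 2)) := by simp [gradIH]
lemma gradIH3 {N : ℕ} (m : Fin N → ℝ) (q : Fin N → V4) (i : Fin N) :
    gradIH m q i 3 = 2 * m i * (q i 3 * (q i 0 ^ 2 + q i 1 ^ 2)) := by simp [gradIH]

lemma key1 {N : ℕ} (m : Fin N → ℝ) (q : Fin N → V4) (i : Fin N) :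
    q i 0 * gradUH m q i 0 + q i 1 * gradUH m q i 1 =
      m i * ∑ j ∈ Finset.univ.erase i,
        m j * (q i 0 * q j 0 + q i 1 * q j 1 -
          (q i 0 ^ 2 + q i 1 ^ 2) * Real.cosh (dH (q i) (q j))) /
        (Real.sinh (dH (q i) (q j))) ^ 3 := by
  rw [gradUH_apply, gradUH_apply, Finset.mul_sum, Finset.mul_sum, Finset.mul_sum,
    ← Finset.sum_add_distrib]
  exact Finset.sum_congr rfl fun j _ => by ring

lemma key2 {N : ℕ} (m : Fin N → ℝ) (q : Fin N → V4) (i : Fin N) :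
    q i 0 * gradUH m q i 1 - q i 1 * gradUH m q i 0 =
      m i * ∑ j ∈ Finset.univ.erase i,
        m j * (q i 0 * q j 1 - q j 0 * q i 1) / (Real.sinh (dH (q i) (q j))) ^ 3 := by
  rw [gradUH_apply, gradUH_apply, Finset.mul_sum, Finset.mul_sum, Finset.mul_sum,
    ← Finset.sum_sub_distrib]
  exact Finset.sum_congr rfl fun j _ => by ring

lemma key3 {N : ℕ} (m : Fin N → ℝ) (q : Fin N → V4) (i : Fin N) :
    q i 2 * gradUH m q i 3 - q i 3 * gradUH m q i 2 =
      m i * ∑ j ∈ Finset.univ.erase i,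
        m j * (q i 2 * q j 3 - q j 2 * q i 3) / (Real.sinh (dH (q i) (q j))) ^ 3 := by
  rw [gradUH_apply, gradUH_apply, Finset.mul_sum, Finset.mul_sum, Finset.mul_sum,
    ← Finset.sum_sub_distrib]
  exact Finset.sum_congr rfl fun j _ => by ring

lemma tanU {N : ℕ} (m : Fin N → ℝ) (q : Fin N → V4) (hq : ∀ i, q i ∈ hyper3) (i : Fin N) :
    q i 0 * gradUH m q i 0 + q i 1 * gradUH m q i 1 + q i 2 * gradUH m q i 2 -
      q i 3 * gradUH m q i 3 = 0 := by
  rw [gradUH_apply, gradUH_apply, gradUH_apply, gradUH_apply, Finset.mul_sum, Finset.mul_sum,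
    Finset.mul_sum, Finset.mul_sum, ← Finset.sum_add_distrib, ← Finset.sum_add_distrib,
    ← Finset.sum_sub_distrib]
  refine Finset.sum_eq_zero fun j _ => ?_
  rw [cosh_dH (hq i) (hq j)]
  have hP := (hq i).1
  simp only [mdot4]
  linear_combination (m i * m j / (Real.sinh (dH (q i) (q j)))^3 *
    (q i 0 * q j 0 + q i 1 * q j 1 + q i 2 * q j 2 - q i 3 * q j 3)) * hP

lemma gradIH_zero {N : ℕ} (m : Fin N → ℝ) (q : Fin N → V4) (i : Fin N) (h : q i ∈ H1zw) :
    gradIH m q i = 0 := by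
  obtain ⟨-, -, h0, h1⟩ := h
  funext k
  fin_cases k <;> simp [gradIH, h0, h1]

lemma main_iff {N : ℕ} (m : Fin N → ℝ) (hm : ∀ i, 0 < m i) (q : Fin N → V4)
    (hq : ∀ i, q i ∈ hyper3) (lam : ℝ) (i : Fin N) (hiH : q i ∉ H1zw) :
    gradUH m q i = lam • gradIH m q i ↔
      ((∑ j ∈ Finset.univ.erase i,
            m j * (q i 0 * q j 0 + q i 1 * q j 1 -
              (q i 0 ^ 2 + q i 1 ^ 2) * Real.cosh (dH (q i) (q j))) /
            (Real.sinh (dH (q i) (q j))) ^ 3 =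
          2 * lam * (q i 0 ^ 2 + q i 1 ^ 2) * (q i 3 ^ 2 - q i 2 ^ 2)) ∧
        (∑ j ∈ Finset.univ.erase i,
            m j * (q i 0 * q j 1 - q j 0 * q i 1) / (Real.sinh (dH (q i) (q j))) ^ 3 = 0) ∧
        (∑ j ∈ Finset.univ.erase i,
            m j * (q i 2 * q j 3 - q j 2 * q i 3) / (Real.sinh (dH (q i) (q j))) ^ 3 = 0)) := by
  have hH := (hq i).1
  have hw := (hq i).2
  have hm0 : m i ≠ 0 := (hm i).ne'
  constructor
  · intro h
    have hk : ∀ k : Fin 4, gradUH m q i k = lam * gradIH m q i k := by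
      intro k; rw [h]; simp
    refine ⟨?_, ?_, ?_⟩
    · refine mul_left_cancel₀ hm0 ?_
      rw [← key1, hk 0, hk 1, gradIH0, gradIH1]; ring
    · refine mul_left_cancel₀ hm0 ?_
      rw [← key2, hk 0, hk 1, gradIH0, gradIH1]; ring
    · refine mul_left_cancel₀ hm0 ?_
      rw [← key3, hk 2, hk 3, gradIH2, gradIH3]; ring
  · rintro ⟨e1', e2', e3'⟩
    have hr2 : q i 0 ^ 2 + q i 1 ^ 2 ≠ 0 := by
      intro h0
      have hx : q i 0 = 0 := by nlinarith [sq_nonneg (q i 0), sq_nonneg (q i 1)]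
      have hy : q i 1 = 0 := by nlinarith [sq_nonneg (q i 0), sq_nonneg (q i 1)]
      exact hiH ⟨by nlinarith, hw, hx, hy⟩
    have hrho : q i 3 ^ 2 - q i 2 ^ 2 ≠ 0 := by nlinarith [sq_nonneg (q i 0), sq_nonneg (q i 1)]
    have E1 : q i 0 * gradUH m q i 0 + q i 1 * gradUH m q i 1 =
        m i * (2 * lam * (q i 0 ^ 2 + q i 1 ^ 2) * (q i 3 ^ 2 - q i 2 ^ 2)) := by
      rw [key1, e1']
    have E2 : q i 0 * gradUH m q i 1 - q i 1 * gradUH m q i 0 = m i * 0 := by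
      rw [key2, e2']
    have E3 : q i 2 * gradUH m q i 3 - q i 3 * gradUH m q i 2 = m i * 0 := by
      rw [key3, e3']
    have E4 := tanU m q hq i
    have h0 : gradUH m q i 0 = lam * (2 * m i * (q i 0 * (q i 3 ^ 2 - q i 2 ^ 2))) := by
      refine mul_right_cancel₀ hr2 ?_
      linear_combination q i 0 * E1 - q i 1 * E2
    have h1 : gradUH m q i 1 = lam * (2 * m i * (q i 1 * (q i 3 ^ 2 - q i 2 ^ 2))) := by
      refine mul_right_cancel₀ hr2 ?_
      linear_combination q i 1 * E1 + q i 0 * E2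
    have h2 : gradUH m q i 2 = lam * (2 * m i * (q i 2 * (q i 0 ^ 2 + q i 1 ^ 2))) := by
      refine mul_right_cancel₀ hrho ?_
      linear_combination (-(q i 2)) * E4 + q i 2 * E1 + (-(q i 3)) * E3
    have h3 : gradUH m q i 3 = lam * (2 * m i * (q i 3 * (q i 0 ^ 2 + q i 1 ^ 2))) := by
      refine mul_right_cancel₀ hw.ne' ?_
      linear_combination (-1 : ℝ) * E4 + E1 + q i 2 * h2
    funext k
    fin_cases k
    · show gradUH m q i 0 = (lam • gradIH m q i) 0
      rw [Pi.smul_apply, smul_eq_mul, gradIH0]; exact h0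
    · show gradUH m q i 1 = (lam • gradIH m q i) 1
      rw [Pi.smul_apply, smul_eq_mul, gradIH1]; exact h1
    · show gradUH m q i 2 = (lam • gradIH m q i) 2
      rw [Pi.smul_apply, smul_eq_mul, gradIH2]; exact h2
    · show gradUH m q i 3 = (lam • gradIH m q i) 3
      rw [Pi.smul_apply, smul_eq_mul, gradIH3]; exact h3

/-- Criterion for central configurations in `H³`. -/
theorem statement7 (N : ℕ) (hN : 2 ≤ N) (m : Fin N → ℝ) (hm : ∀ i, 0 < m i)
    (q : Fin N → V4) (hq : ∀ i, q i ∈ hyper3)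
    (hns : ∀ i j, i ≠ j → q i ≠ q j) :
    (∃ lam : ℝ, ∀ i, gradUH m q i = lam • gradIH m q i) ↔
    ((∀ i, q i ∈ H1zw → gradUH m q i = 0) ∧
      ∃ lam : ℝ, ∀ i, q i ∉ H1zw →
        (∑ j ∈ Finset.univ.erase i,
            m j * (q i 0 * q j 0 + q i 1 * q j 1 -
              (q i 0 ^ 2 + q i 1 ^ 2) * Real.cosh (dH (q i) (q j))) /
            (Real.sinh (dH (q i) (q j))) ^ 3 =
          2 * lam * (q i 0 ^ 2 + q i 1 ^ 2) * (q i 3 ^ 2 - q i 2 ^ 2)) ∧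
        (∑ j ∈ Finset.univ.erase i,
            m j * (q i 0 * q j 1 - q j 0 * q i 1) / (Real.sinh (dH (q i) (q j))) ^ 3 = 0) ∧
        (∑ j ∈ Finset.univ.erase i,
            m j * (q i 2 * q j 3 - q j 2 * q i 3) / (Real.sinh (dH (q i) (q j))) ^ 3 = 0)) := by
  constructor
  · rintro ⟨lam, h⟩
    refine ⟨fun i hi => by rw [h i, gradIH_zero m q i hi, smul_zero], lam, fun i hi => ?_⟩
    exact (main_iff m hm q hq lam i hi).1 (h i)
  · rintro ⟨ha, lam, hb⟩
    refine ⟨lam, fun i => ?_⟩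
    by_cases hi : q i ∈ H1zw
    · rw [ha i hi, gradIH_zero m q i hi, smul_zero]
    · exact (main_iff m hm q hq lam i hi).2 (hb i hi)
end
end

section
/- Let q = (q₁,…,q_N) be an ordinary central configuration in S³ with constant λ, i.e. a nonsingular configuration satisfying ∇_{qᵢ}U(q) = λ∇_{qᵢ}I(q) for all i with ∇_{qᵢ}U(q) ≠ 0 for some i. Then Σᵢ mᵢ rᵢ² ρᵢ² ≠ 0 and λ = [Σ_{1≤i<j≤N} mᵢmⱼ(2xᵢxⱼ + 2yᵢyⱼ − (rᵢ²+rⱼ²) cos d_ij)/sin³ d_ij] / [2 Σᵢ mᵢ rᵢ² ρᵢ²]. In particular, λ is uniquely determined by the configuration. -/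
noncomputable section
open Real Finset

lemma dS_symm' (p q : V4) : dS p q = dS q p := by
  unfold dS dot4; ring_nf

lemma swap_sum' {N : ℕ} (f : Fin N → Fin N → ℝ) :
    ∑ i, ∑ j ∈ Finset.univ.erase i, f i j
      = ∑ i, ∑ j ∈ Finset.univ.filter (fun j => i < j), (f i j + f j i) := by
  have step : ∀ i : Fin N, ∑ j ∈ Finset.univ.erase i, f i j
      = ∑ j ∈ Finset.univ.filter (fun j => i < j), f i j
        + ∑ j ∈ Finset.univ.filter (fun j => j < i), f i j := by
    intro i
    rw [← Finset.sum_filter_add_sum_filter_not (Finset.univ.erase i) (fun j => i < j)]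
    congr 1
    · congr 1; ext j; simp [Finset.mem_filter, Finset.mem_erase, and_comm]
      intro h; exact (ne_of_gt h)
    · congr 1; ext j
      simp only [Finset.mem_filter, Finset.mem_erase, Finset.mem_univ, true_and, and_true,
        not_lt]
      constructor
      · rintro ⟨hne, hle⟩; exact lt_of_le_of_ne hle hne
      · intro h; exact ⟨ne_of_lt h, le_of_lt h⟩
  simp only [step, Finset.sum_add_distrib]
  congr 1
  rw [Finset.sum_comm' (t' := Finset.univ) (s' := fun j => Finset.univ.filter (fun i => j < i))]
  intro i j; simp

/-- The value of `λ` for an ordinary central configuration in `S³`. -/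
theorem statement8 (N : ℕ) (m : Fin N → ℝ) (hm : ∀ i, 0 < m i)
    (q : Fin N → V4) (hq : ∀ i, q i ∈ sphere3)
    (hns : ∀ i j, i ≠ j → q i ≠ q j ∧ q i ≠ -q j) (lam : ℝ)
    (hcc : ∀ i, gradUS m q i = lam • gradIS m q i)
    (hord : ∃ i, gradUS m q i ≠ 0) :
    (∑ i, m i * (q i 0 ^ 2 + q i 1 ^ 2) * (q i 2 ^ 2 + q i 3 ^ 2)) ≠ 0 ∧
    lam = (∑ i, ∑ j ∈ Finset.univ.filter (fun j => i < j),
        m i * m j * (2 * q i 0 * q j 0 + 2 * q i 1 * q j 1 -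
          ((q i 0 ^ 2 + q i 1 ^ 2) + (q j 0 ^ 2 + q j 1 ^ 2)) * Real.cos (dS (q i) (q j))) /
        (Real.sin (dS (q i) (q j))) ^ 3) /
      (2 * ∑ i, m i * (q i 0 ^ 2 + q i 1 ^ 2) * (q i 2 ^ 2 + q i 3 ^ 2)) := by
  classical
  have hSne : (∑ i, m i * (q i 0 ^ 2 + q i 1 ^ 2) * (q i 2 ^ 2 + q i 3 ^ 2)) ≠ 0 := by
    intro h0
    have hterm : ∀ i ∈ (Finset.univ : Finset (Fin N)),
        (0:ℝ) ≤ m i * (q i 0 ^ 2 + q i 1 ^ 2) * (q i 2 ^ 2 + q i 3 ^ 2) := by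
      intro i _
      have := (hm i).le
      positivity
    have hz := (Finset.sum_eq_zero_iff_of_nonneg hterm).mp h0
    obtain ⟨i, hi⟩ := hord
    apply hi
    have h2 : (q i 0 ^ 2 + q i 1 ^ 2) * (q i 2 ^ 2 + q i 3 ^ 2) = 0 := by
      have h := hz i (Finset.mem_univ i)
      have hmne := (hm i).ne'
      have : m i * ((q i 0 ^ 2 + q i 1 ^ 2) * (q i 2 ^ 2 + q i 3 ^ 2)) = 0 := by
        linarith [h]
      exact (mul_eq_zero.mp this).resolve_left hmne
    have hIz : gradIS m q i = 0 := by
      rcases mul_eq_zero.mp h2 with hr | hρ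
      · have hx : q i 0 = 0 := by nlinarith [sq_nonneg (q i 0), sq_nonneg (q i 1)]
        have hy : q i 1 = 0 := by nlinarith [sq_nonneg (q i 0), sq_nonneg (q i 1)]
        funext k; fin_cases k <;>
          simp [gradIS, hx, hy]
      · have hzz : q i 2 = 0 := by nlinarith [sq_nonneg (q i 2), sq_nonneg (q i 3)]
        have hw : q i 3 = 0 := by nlinarith [sq_nonneg (q i 2), sq_nonneg (q i 3)]
        funext k; fin_cases k <;>
          simp [gradIS, hzz, hw]
    rw [hcc i, hIz, smul_zero]
  refine ⟨hSne, ?_⟩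
  rw [eq_div_iff (mul_ne_zero two_ne_zero hSne)]
  set f : Fin N → Fin N → ℝ := fun i j =>
    m i * m j / (Real.sin (dS (q i) (q j))) ^ 3 *
      (q j 0 * q i 0 + q j 1 * q i 1 -
        Real.cos (dS (q i) (q j)) * (q i 0 ^ 2 + q i 1 ^ 2)) with hf
  have key : ∀ i, ∑ j ∈ Finset.univ.erase i, f i j
      = lam * (2 * (m i * (q i 0 ^ 2 + q i 1 ^ 2) * (q i 2 ^ 2 + q i 3 ^ 2))) := by
    intro i
    have h0 := congrFun (hcc i) 0
    have h1 := congrFun (hcc i) 1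
    simp only [gradUS, gradIS, Finset.sum_apply, Pi.smul_apply, Pi.sub_apply, smul_eq_mul,
      Matrix.cons_val_zero, Matrix.cons_val_one, Matrix.head_cons] at h0 h1
    have hrw : ∑ j ∈ Finset.univ.erase i, f i j
        = (∑ j ∈ Finset.univ.erase i,
            m i * m j / (Real.sin (dS (q i) (q j))) ^ 3 *
              (q j 0 - Real.cos (dS (q i) (q j)) * q i 0)) * q i 0
          + (∑ j ∈ Finset.univ.erase i,
            m i * m j / (Real.sin (dS (q i) (q j))) ^ 3 *
              (q j 1 - Real.cos (dS (q i) (q j)) * q i 1)) * q i 1 := by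
      rw [Finset.sum_mul, Finset.sum_mul, ← Finset.sum_add_distrib]
      apply Finset.sum_congr rfl
      intro j _
      rw [hf]; ring
    rw [hrw, h0, h1]
    ring
  symm
  calc
    (∑ i, ∑ j ∈ Finset.univ.filter (fun j => i < j),
        m i * m j * (2 * q i 0 * q j 0 + 2 * q i 1 * q j 1 -
          ((q i 0 ^ 2 + q i 1 ^ 2) + (q j 0 ^ 2 + q j 1 ^ 2)) * Real.cos (dS (q i) (q j))) /
        (Real.sin (dS (q i) (q j))) ^ 3)
      = ∑ i, ∑ j ∈ Finset.univ.filter (fun j => i < j), (f i j + f j i) := by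
        apply Finset.sum_congr rfl; intro i _
        apply Finset.sum_congr rfl; intro j _
        rw [hf]
        simp only []
        rw [dS_symm' (q j) (q i)]
        ring
    _ = ∑ i, ∑ j ∈ Finset.univ.erase i, f i j := (swap_sum' f).symm
    _ = ∑ i, lam * (2 * (m i * (q i 0 ^ 2 + q i 1 ^ 2) * (q i 2 ^ 2 + q i 3 ^ 2))) := by
        exact Finset.sum_congr rfl fun i _ => key i
    _ = lam * (2 * ∑ i, m i * (q i 0 ^ 2 + q i 1 ^ 2) * (q i 2 ^ 2 + q i 3 ^ 2)) := by
        rw [← Finset.mul_sum, ← Finset.mul_sum]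
end
end

section
/- Let N ≥ 2 and let q = (q₁,…,q_N) be a central configuration in H³ with constant λ, i.e. a nonsingular configuration satisfying ∇_{qᵢ}U(q) = λ∇_{qᵢ}I(q) for all i. Then Σᵢ mᵢ rᵢ² ρᵢ² > 0 (in particular not all qᵢ lie on H¹_zw), and λ = [Σ_{1≤i<j≤N} mᵢmⱼ(2xᵢxⱼ + 2yᵢyⱼ − (rᵢ²+rⱼ²) cosh d_ij)/sinh³ d_ij] / [2 Σᵢ mᵢ rᵢ² ρᵢ²] < 0. -/
noncomputable section
open Real Finset

set_option maxHeartbeats 1600000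

lemma mdot4_symm (p q : V4) : mdot4 p q = mdot4 q p := by unfold mdot4; ring

lemma dH_symm (p q : V4) : dH p q = dH q p := by unfold dH; rw [mdot4_symm]

lemma one_lt_neg_mdot4 {p r : V4} (hp : p ∈ hyper3) (hr : r ∈ hyper3) (hne : p ≠ r) :
    1 < -(mdot4 p r) := by
  obtain ⟨hp1, hp2⟩ := hp
  obtain ⟨hr1, hr2⟩ := hr
  by_contra hcon
  push_neg at hcon
  apply hne
  unfold mdot4 at hcon
  have cs : (p 0 * r 0 + p 1 * r 1 + p 2 * r 2)^2 ≤
      (p 0^2 + p 1^2 + p 2^2) * (r 0^2 + r 1^2 + r 2^2) := by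
    nlinarith [sq_nonneg (p 0 * r 1 - p 1 * r 0), sq_nonneg (p 0 * r 2 - p 2 * r 0),
      sq_nonneg (p 1 * r 2 - p 2 * r 1)]
  have hw1 : 1 ≤ p 3 := by nlinarith [sq_nonneg (p 0), sq_nonneg (p 1), sq_nonneg (p 2)]
  have hw2 : 1 ≤ r 3 := by nlinarith [sq_nonneg (r 0), sq_nonneg (r 1), sq_nonneg (r 2)]
  have hW : 1 ≤ p 3 * r 3 := by nlinarith
  have ha : 0 ≤ 1 + (p 0 * r 0 + p 1 * r 1 + p 2 * r 2) - p 3 * r 3 := by linarith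
  have hb : 0 ≤ (p 0 * r 0 + p 1 * r 1 + p 2 * r 2) + p 3 * r 3 - 1 := by linarith
  have key := mul_nonneg ha hb
  have h3sq : (p 3 - r 3)^2 ≤ 0 := by nlinarith [key, cs]
  have h3 : p 3 = r 3 :=
    sub_eq_zero.mp (sq_eq_zero_iff.mp (le_antisymm h3sq (sq_nonneg _)))
  have hsum : (p 0 - r 0)^2 + (p 1 - r 1)^2 + (p 2 - r 2)^2 ≤ 0 := by nlinarith [hcon, h3]
  have h0 : p 0 = r 0 := sub_eq_zero.mp (sq_eq_zero_iff.mp (le_antisymm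
    (by nlinarith [sq_nonneg (p 1 - r 1), sq_nonneg (p 2 - r 2)]) (sq_nonneg _)))
  have h1 : p 1 = r 1 := sub_eq_zero.mp (sq_eq_zero_iff.mp (le_antisymm
    (by nlinarith [sq_nonneg (p 0 - r 0), sq_nonneg (p 2 - r 2)]) (sq_nonneg _)))
  have h2 : p 2 = r 2 := sub_eq_zero.mp (sq_eq_zero_iff.mp (le_antisymm
    (by nlinarith [sq_nonneg (p 0 - r 0), sq_nonneg (p 1 - r 1)]) (sq_nonneg _)))
  funext k
  fin_cases k <;> assumption

lemma arcosh_pos' {c : ℝ} (hc : 1 < c) : 0 < _root_.arcosh c := by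
  unfold _root_.arcosh
  have h := Real.sqrt_nonneg (c^2 - 1)
  exact Real.log_pos (by linarith)

lemma dH_pos {p r : V4} (hp : p ∈ hyper3) (hr : r ∈ hyper3) (hne : p ≠ r) : 0 < dH p r :=
  arcosh_pos' (one_lt_neg_mdot4 hp hr hne)

lemma sinh_dH_pos {p r : V4} (hp : p ∈ hyper3) (hr : r ∈ hyper3) (hne : p ≠ r) :
    0 < Real.sinh (dH p r) :=
  Real.sinh_pos_iff.mpr (dH_pos hp hr hne)

lemma one_lt_cosh_dH {p r : V4} (hp : p ∈ hyper3) (hr : r ∈ hyper3) (hne : p ≠ r) :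
    1 < Real.cosh (dH p r) :=
  Real.one_lt_cosh.mpr (ne_of_gt (dH_pos hp hr hne))

lemma sum_erase_symm {N : ℕ} (g : Fin N → Fin N → ℝ) :
    ∑ i, ∑ j ∈ Finset.univ.erase i, g i j
      = ∑ i, ∑ j ∈ Finset.univ.filter (fun j => i < j), (g i j + g j i) := by
  have h1 : ∀ i : Fin N, ∑ j ∈ Finset.univ.erase i, g i j
      = (∑ j ∈ Finset.univ.filter (fun j => i < j), g i j)
        + ∑ j ∈ Finset.univ.filter (fun j => j < i), g i j := by
    intro i
    rw [show Finset.univ.erase i = Finset.univ.filter (fun j => j ≠ i) by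
      ext j; simp [Finset.mem_erase]]
    rw [Finset.sum_filter, Finset.sum_filter, Finset.sum_filter, ← Finset.sum_add_distrib]
    apply Finset.sum_congr rfl
    intro j _
    rcases lt_trichotomy i j with h | h | h
    · simp [h, h.ne', not_lt_of_gt h]
    · simp [h]
    · simp [h, h.ne, not_lt_of_gt h]
  have h2 : ∑ i : Fin N, ∑ j ∈ Finset.univ.filter (fun j => j < i), g i j
      = ∑ i : Fin N, ∑ j ∈ Finset.univ.filter (fun j => i < j), g j i := by
    simp_rw [Finset.sum_filter]
    rw [Finset.sum_comm]
  simp_rw [h1]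
  rw [Finset.sum_add_distrib, h2, ← Finset.sum_add_distrib]
  congr 1
  funext i
  rw [← Finset.sum_add_distrib]

lemma zw_lemma {zj z0 wj w0 : ℝ} (hwj : 0 < wj) (hw0 : 0 < w0)
    (hj : wj ^ 2 = 1 + zj ^ 2) (h0 : w0 ^ 2 = 1 + z0 ^ 2) (hlt : zj < z0) :
    zj * w0 - wj * z0 < 0 := by
  have hwj' : wj = Real.cosh (Real.arsinh zj) := by
    rw [Real.cosh_arsinh, ← hj, Real.sqrt_sq hwj.le]
  have hw0' : w0 = Real.cosh (Real.arsinh z0) := by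
    rw [Real.cosh_arsinh, ← h0, Real.sqrt_sq hw0.le]
  have heq : zj * w0 - wj * z0 = Real.sinh (Real.arsinh zj - Real.arsinh z0) := by
    rw [Real.sinh_sub, Real.sinh_arsinh, Real.sinh_arsinh, hwj', hw0']
  rw [heq]
  have ht : Real.arsinh zj < Real.arsinh z0 := Real.arsinh_lt_arsinh.mpr hlt
  have h := Real.sinh_lt_sinh.mpr (show Real.arsinh zj - Real.arsinh z0 < 0 by linarith)
  simpa using h

/-- The value of `λ` for a central configuration in `H³` is negative. -/
theorem statement9 (N : ℕ) (hN : 2 ≤ N) (m : Fin N → ℝ) (hm : ∀ i, 0 < m i)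
    (q : Fin N → V4) (hq : ∀ i, q i ∈ hyper3)
    (hns : ∀ i j, i ≠ j → q i ≠ q j) (lam : ℝ)
    (hcc : ∀ i, gradUH m q i = lam • gradIH m q i) :
    (0 < ∑ i, m i * (q i 0 ^ 2 + q i 1 ^ 2) * (q i 3 ^ 2 - q i 2 ^ 2)) ∧
    lam = (∑ i, ∑ j ∈ Finset.univ.filter (fun j => i < j),
        m i * m j * (2 * q i 0 * q j 0 + 2 * q i 1 * q j 1 -
          ((q i 0 ^ 2 + q i 1 ^ 2) + (q j 0 ^ 2 + q j 1 ^ 2)) * Real.cosh (dH (q i) (q j))) /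
        (Real.sinh (dH (q i) (q j))) ^ 3) /
      (2 * ∑ i, m i * (q i 0 ^ 2 + q i 1 ^ 2) * (q i 3 ^ 2 - q i 2 ^ 2)) ∧
    lam < 0 := by
  have hρ : ∀ i, 0 < q i 3 ^ 2 - q i 2 ^ 2 := by
    intro i
    have h := (hq i).1
    nlinarith [sq_nonneg (q i 0), sq_nonneg (q i 1)]
  -- Step A : some body is off the geodesic H¹_zw
  have hex : ∃ i, 0 < q i 0 ^ 2 + q i 1 ^ 2 := by
    by_contra hall
    push_neg at hall
    have hxy : ∀ i, q i 0 = 0 ∧ q i 1 = 0 := by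
      intro i
      have h := hall i
      constructor
      · exact sq_eq_zero_iff.mp (le_antisymm (by nlinarith [sq_nonneg (q i 1)]) (sq_nonneg _))
      · exact sq_eq_zero_iff.mp (le_antisymm (by nlinarith [sq_nonneg (q i 0)]) (sq_nonneg _))
    have hgradU0 : ∀ i, gradUH m q i = 0 := by
      intro i
      rw [hcc i]
      have h0 : gradIH m q i = 0 := by
        funext k
        fin_cases k <;> simp [gradIH, (hxy i).1, (hxy i).2]
      rw [h0, smul_zero]
    have hNe : Nonempty (Fin N) := ⟨⟨0, by omega⟩⟩
    obtain ⟨i₀, -, hmax⟩ := Finset.exists_max_image Finset.univ (fun i => q i 2)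
      Finset.univ_nonempty
    have hww : ∀ i, q i 3 ^ 2 = 1 + q i 2 ^ 2 := by
      intro i
      have h := (hq i).1
      rw [(hxy i).1, (hxy i).2] at h
      nlinarith []
    have hcard : 1 < Fintype.card (Fin N) := by simp; omega
    have herase : (Finset.univ.erase i₀).Nonempty := by
      obtain ⟨j, hj⟩ := Fintype.exists_ne_of_one_lt_card hcard i₀
      exact ⟨j, Finset.mem_erase.mpr ⟨hj, Finset.mem_univ _⟩⟩
    have hneg : ∑ j ∈ Finset.univ.erase i₀,
        (m i₀ * m j / (Real.sinh (dH (q i₀) (q j))) ^ 3) *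
          (q j 2 * q i₀ 3 - q j 3 * q i₀ 2) < 0 := by
      apply Finset.sum_neg _ herase
      intro j hj
      have hji : j ≠ i₀ := Finset.ne_of_mem_erase hj
      have hqne : q i₀ ≠ q j := hns i₀ j (Ne.symm hji)
      have hzne : q j 2 ≠ q i₀ 2 := by
        intro hz
        apply hqne
        have hw : q j 3 = q i₀ 3 := by
          have h1 := hww j
          have h2 := hww i₀
          have hmul : (q j 3 - q i₀ 3) * (q j 3 + q i₀ 3) = 0 := by
            rw [hz] at h1; nlinarith [h1, h2]
          rcases mul_eq_zero.mp hmul with h | h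
          · linarith [sub_eq_zero.mp h]
          · have := (hq j).2; have := (hq i₀).2; linarith
        exact (funext fun k => by
          fin_cases k <;>
            simp [(hxy j).1, (hxy j).2, (hxy i₀).1, (hxy i₀).2, hz, hw]).symm
      have hzlt : q j 2 < q i₀ 2 := lt_of_le_of_ne (hmax j (Finset.mem_univ _)) hzne
      have hfac : q j 2 * q i₀ 3 - q j 3 * q i₀ 2 < 0 :=
        zw_lemma (hq j).2 (hq i₀).2 (hww j) (hww i₀) hzlt
      have hc : 0 < m i₀ * m j / (Real.sinh (dH (q i₀) (q j))) ^ 3 :=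
        div_pos (mul_pos (hm i₀) (hm j)) (pow_pos (sinh_dH_pos (hq i₀) (hq j) hqne) 3)
      exact mul_neg_of_pos_of_neg hc hfac
    have h2 := congrFun (hgradU0 i₀) 2
    have h3 := congrFun (hgradU0 i₀) 3
    rw [gradUH_apply] at h2 h3
    simp only [Pi.zero_apply] at h2 h3
    have hcomb : ∑ j ∈ Finset.univ.erase i₀,
        (m i₀ * m j / (Real.sinh (dH (q i₀) (q j))) ^ 3) *
          (q j 2 * q i₀ 3 - q j 3 * q i₀ 2)
        = q i₀ 3 * (∑ j ∈ Finset.univ.erase i₀,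
            (m i₀ * m j / (Real.sinh (dH (q i₀) (q j))) ^ 3) *
              (q j 2 - Real.cosh (dH (q i₀) (q j)) * q i₀ 2))
          - q i₀ 2 * (∑ j ∈ Finset.univ.erase i₀,
            (m i₀ * m j / (Real.sinh (dH (q i₀) (q j))) ^ 3) *
              (q j 3 - Real.cosh (dH (q i₀) (q j)) * q i₀ 3)) := by
      rw [Finset.mul_sum, Finset.mul_sum, ← Finset.sum_sub_distrib]
      apply Finset.sum_congr rfl
      intro j _
      ring
    rw [hcomb, h2, h3] at hneg
    norm_num at hneg
  obtain ⟨i₁, hi₁⟩ := hex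
  -- Step B : the moment sum is positive
  have hS : 0 < ∑ i, m i * (q i 0 ^ 2 + q i 1 ^ 2) * (q i 3 ^ 2 - q i 2 ^ 2) := by
    apply Finset.sum_pos'
    · intro i _
      exact mul_nonneg (mul_nonneg (hm i).le (by positivity)) (hρ i).le
    · exact ⟨i₁, Finset.mem_univ _, mul_pos (mul_pos (hm i₁) hi₁) (hρ i₁)⟩
  -- Step C : the identity T = lam * 2S
  have hkey : ∀ i, (∑ j ∈ Finset.univ.erase i,
      (m i * m j / (Real.sinh (dH (q i) (q j))) ^ 3) *
        (q i 0 * q j 0 + q i 1 * q j 1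
          - Real.cosh (dH (q i) (q j)) * (q i 0 ^ 2 + q i 1 ^ 2)))
      = lam * (2 * (m i * (q i 0 ^ 2 + q i 1 ^ 2) * (q i 3 ^ 2 - q i 2 ^ 2))) := by
    intro i
    have h0 := congrFun (hcc i) 0
    have h1 := congrFun (hcc i) 1
    rw [gradUH_apply] at h0 h1
    have hI0 : (lam • gradIH m q i) 0
        = lam * (2 * m i * (q i 0 * (q i 3 ^ 2 - q i 2 ^ 2))) := by
      simp [gradIH]
    have hI1 : (lam • gradIH m q i) 1
        = lam * (2 * m i * (q i 1 * (q i 3 ^ 2 - q i 2 ^ 2))) := by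
      simp [gradIH]
    rw [hI0] at h0
    rw [hI1] at h1
    have expand : (∑ j ∈ Finset.univ.erase i,
        (m i * m j / (Real.sinh (dH (q i) (q j))) ^ 3) *
          (q i 0 * q j 0 + q i 1 * q j 1
            - Real.cosh (dH (q i) (q j)) * (q i 0 ^ 2 + q i 1 ^ 2)))
        = q i 0 * (∑ j ∈ Finset.univ.erase i,
            (m i * m j / (Real.sinh (dH (q i) (q j))) ^ 3) *
              (q j 0 - Real.cosh (dH (q i) (q j)) * q i 0))
          + q i 1 * (∑ j ∈ Finset.univ.erase i,
            (m i * m j / (Real.sinh (dH (q i) (q j))) ^ 3) *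
              (q j 1 - Real.cosh (dH (q i) (q j)) * q i 1)) := by
      rw [Finset.mul_sum, Finset.mul_sum, ← Finset.sum_add_distrib]
      apply Finset.sum_congr rfl
      intro j _
      ring
    rw [expand, h0, h1]
    ring
  have hsum1 : ∑ i, ∑ j ∈ Finset.univ.erase i,
      (m i * m j / (Real.sinh (dH (q i) (q j))) ^ 3) *
        (q i 0 * q j 0 + q i 1 * q j 1
          - Real.cosh (dH (q i) (q j)) * (q i 0 ^ 2 + q i 1 ^ 2))
      = lam * (2 * ∑ i, m i * (q i 0 ^ 2 + q i 1 ^ 2) * (q i 3 ^ 2 - q i 2 ^ 2)) := by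
    rw [Finset.sum_congr rfl (fun i _ => hkey i), ← Finset.mul_sum, ← Finset.mul_sum]
  have hsym := sum_erase_symm (fun i j =>
    (m i * m j / (Real.sinh (dH (q i) (q j))) ^ 3) *
      (q i 0 * q j 0 + q i 1 * q j 1
        - Real.cosh (dH (q i) (q j)) * (q i 0 ^ 2 + q i 1 ^ 2)))
  have hTnum : (∑ i, ∑ j ∈ Finset.univ.filter (fun j => i < j),
        m i * m j * (2 * q i 0 * q j 0 + 2 * q i 1 * q j 1 -
          ((q i 0 ^ 2 + q i 1 ^ 2) + (q j 0 ^ 2 + q j 1 ^ 2)) * Real.cosh (dH (q i) (q j))) /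
        (Real.sinh (dH (q i) (q j))) ^ 3)
      = lam * (2 * ∑ i, m i * (q i 0 ^ 2 + q i 1 ^ 2) * (q i 3 ^ 2 - q i 2 ^ 2)) := by
    rw [← hsum1, hsym]
    apply Finset.sum_congr rfl
    intro i _
    apply Finset.sum_congr rfl
    intro j _
    rw [dH_symm (q j) (q i)]
    ring
  -- T < 0
  have hle : ∀ i j : Fin N, i ≠ j →
      m i * m j * (2 * q i 0 * q j 0 + 2 * q i 1 * q j 1 -
          ((q i 0 ^ 2 + q i 1 ^ 2) + (q j 0 ^ 2 + q j 1 ^ 2)) * Real.cosh (dH (q i) (q j))) /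
        (Real.sinh (dH (q i) (q j))) ^ 3 ≤ 0 := by
    intro i j hij
    have hch : 1 ≤ Real.cosh (dH (q i) (q j)) := Real.one_le_cosh _
    have hnum : 2 * q i 0 * q j 0 + 2 * q i 1 * q j 1 -
        ((q i 0 ^ 2 + q i 1 ^ 2) + (q j 0 ^ 2 + q j 1 ^ 2)) * Real.cosh (dH (q i) (q j)) ≤ 0 := by
      nlinarith [sq_nonneg (q i 0 - q j 0), sq_nonneg (q i 1 - q j 1),
        mul_nonneg (by positivity : (0:ℝ) ≤ q i 0 ^ 2 + q i 1 ^ 2 + (q j 0 ^ 2 + q j 1 ^ 2))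
          (by linarith : (0:ℝ) ≤ Real.cosh (dH (q i) (q j)) - 1)]
    have hden : 0 < (Real.sinh (dH (q i) (q j))) ^ 3 :=
      pow_pos (sinh_dH_pos (hq i) (hq j) (hns i j hij)) 3
    exact div_nonpos_of_nonpos_of_nonneg (mul_nonpos_of_nonneg_of_nonpos
      (mul_pos (hm i) (hm j)).le hnum) hden.le
  have hstrict : ∀ a b : Fin N, a ≠ b →
      0 < (q a 0 ^ 2 + q a 1 ^ 2) + (q b 0 ^ 2 + q b 1 ^ 2) →
      m a * m b * (2 * q a 0 * q b 0 + 2 * q a 1 * q b 1 -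
          ((q a 0 ^ 2 + q a 1 ^ 2) + (q b 0 ^ 2 + q b 1 ^ 2)) * Real.cosh (dH (q a) (q b))) /
        (Real.sinh (dH (q a) (q b))) ^ 3 < 0 := by
    intro a b hab hr
    have hch : 1 < Real.cosh (dH (q a) (q b)) := one_lt_cosh_dH (hq a) (hq b) (hns a b hab)
    have hnum : 2 * q a 0 * q b 0 + 2 * q a 1 * q b 1 -
        ((q a 0 ^ 2 + q a 1 ^ 2) + (q b 0 ^ 2 + q b 1 ^ 2)) * Real.cosh (dH (q a) (q b)) < 0 := by
      nlinarith [sq_nonneg (q a 0 - q b 0), sq_nonneg (q a 1 - q b 1),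
        mul_pos hr (by linarith : (0:ℝ) < Real.cosh (dH (q a) (q b)) - 1)]
    have hden : 0 < (Real.sinh (dH (q a) (q b))) ^ 3 :=
      pow_pos (sinh_dH_pos (hq a) (hq b) (hns a b hab)) 3
    exact div_neg_of_neg_of_pos (mul_neg_of_pos_of_neg (mul_pos (hm a) (hm b)) hnum) hden
  have hTneg : (∑ i, ∑ j ∈ Finset.univ.filter (fun j => i < j),
        m i * m j * (2 * q i 0 * q j 0 + 2 * q i 1 * q j 1 -
          ((q i 0 ^ 2 + q i 1 ^ 2) + (q j 0 ^ 2 + q j 1 ^ 2)) * Real.cosh (dH (q i) (q j))) /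
        (Real.sinh (dH (q i) (q j))) ^ 3) < 0 := by
    have hcard : 1 < Fintype.card (Fin N) := by simp; omega
    obtain ⟨a, b, hab, hr⟩ : ∃ a b : Fin N, a < b ∧
        0 < (q a 0 ^ 2 + q a 1 ^ 2) + (q b 0 ^ 2 + q b 1 ^ 2) := by
      obtain ⟨k, hk⟩ := Fintype.exists_ne_of_one_lt_card hcard i₁
      rcases hk.lt_or_gt with h | h
      · exact ⟨k, i₁, h, by positivity⟩
      · exact ⟨i₁, k, h, by positivity⟩
    have hinner_nonpos : ∀ i : Fin N, (∑ j ∈ Finset.univ.filter (fun j => i < j),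
        m i * m j * (2 * q i 0 * q j 0 + 2 * q i 1 * q j 1 -
          ((q i 0 ^ 2 + q i 1 ^ 2) + (q j 0 ^ 2 + q j 1 ^ 2)) * Real.cosh (dH (q i) (q j))) /
        (Real.sinh (dH (q i) (q j))) ^ 3) ≤ 0 := by
      intro i
      apply Finset.sum_nonpos
      intro j hj
      exact hle i j (Finset.mem_filter.mp hj).2.ne
    have hinner_a : (∑ j ∈ Finset.univ.filter (fun j => a < j),
        m a * m j * (2 * q a 0 * q j 0 + 2 * q a 1 * q j 1 -
          ((q a 0 ^ 2 + q a 1 ^ 2) + (q j 0 ^ 2 + q j 1 ^ 2)) * Real.cosh (dH (q a) (q j))) /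
        (Real.sinh (dH (q a) (q j))) ^ 3) < 0 := by
      have h := Finset.sum_lt_sum (s := Finset.univ.filter (fun j => a < j))
        (g := fun _ => (0:ℝ))
        (fun j hj => hle a j (Finset.mem_filter.mp hj).2.ne)
        ⟨b, Finset.mem_filter.mpr ⟨Finset.mem_univ _, hab⟩, hstrict a b hab.ne hr⟩
      simpa using h
    have h := Finset.sum_lt_sum (s := Finset.univ) (g := fun _ : Fin N => (0:ℝ))
      (fun i _ => hinner_nonpos i) ⟨a, Finset.mem_univ _, hinner_a⟩
    simpa using h
  refine ⟨hS, ?_, ?_⟩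
  · rw [eq_div_iff (by positivity : (2 * ∑ i, m i * (q i 0 ^ 2 + q i 1 ^ 2) * (q i 3 ^ 2 - q i 2 ^ 2)) ≠ 0)]
    linarith [hTnum]
  · by_contra hcon
    push_neg at hcon
    nlinarith [mul_nonneg hcon (by linarith :
      (0:ℝ) ≤ 2 * ∑ i, m i * (q i 0 ^ 2 + q i 1 ^ 2) * (q i 3 ^ 2 - q i 2 ^ 2)), hTnum, hTneg]
end
end

section
/- Let m₁,…,m_N > 0 and let c ≥ 0 be such that c ≠ Σᵢ mᵢμᵢ for every choice of μ₁,…,μ_N ∈ {0,1}. Then c is a regular value of the moment of inertia I : (S³)^N → ℝ: for every q = (q₁,…,q_N) ∈ (S³)^N with I(q) = c there exists an index i such that 0 < xᵢ²+yᵢ² < 1, i.e. qᵢ ∉ S¹_xy ∪ S¹_zw and hence ∇_{qᵢ}I(q) ≠ 0. Consequently I⁻¹(c) is a smooth submanifold of (S³)^N. -/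
noncomputable section
open Real Finset

/-- Values `c` not of the form `Σ mᵢμᵢ`, `μᵢ ∈ {0,1}`, are regular
values of the moment of inertia on `(S³)^N`. -/
theorem statement12 (N : ℕ) (m : Fin N → ℝ) (hm : ∀ i, 0 < m i) (c : ℝ) (hc : 0 ≤ c)
    (hreg : ∀ μ : Fin N → ℝ, (∀ i, μ i = 0 ∨ μ i = 1) → c ≠ ∑ i, m i * μ i) :
    ∀ q : Fin N → V4, (∀ i, q i ∈ sphere3) →
      (∑ i, m i * (q i 0 ^ 2 + q i 1 ^ 2)) = c →
      ∃ i, 0 < q i 0 ^ 2 + q i 1 ^ 2 ∧ q i 0 ^ 2 + q i 1 ^ 2 < 1 ∧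
        q i ∉ S1xy ∪ S1zw ∧ gradIS m q i ≠ 0 := by
  intro q hq hI
  -- first find i with 0 < r² < 1
  have key : ∃ i, 0 < q i 0 ^ 2 + q i 1 ^ 2 ∧ q i 0 ^ 2 + q i 1 ^ 2 < 1 := by
    by_contra h
    push_neg at h
    have hμ : ∀ i, q i 0 ^ 2 + q i 1 ^ 2 = 0 ∨ q i 0 ^ 2 + q i 1 ^ 2 = 1 := by
      intro i
      have hs := hq i
      simp only [sphere3, Set.mem_setOf_eq] at hs
      have h1 : q i 0 ^ 2 + q i 1 ^ 2 ≤ 1 := by nlinarith [sq_nonneg (q i 2), sq_nonneg (q i 3), hs]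
      have h0 : 0 ≤ q i 0 ^ 2 + q i 1 ^ 2 := by positivity
      rcases lt_or_eq_of_le h0 with h0' | h0'
      · right; exact le_antisymm h1 (h i h0')
      · left; exact h0'.symm
    exact hreg (fun i => q i 0 ^ 2 + q i 1 ^ 2) hμ hI.symm
  obtain ⟨i, h0, h1⟩ := key
  refine ⟨i, h0, h1, ?_, ?_⟩
  · rintro (h | h)
    · exact absurd h.1 (by linarith)
    · simp only [S1zw, Set.mem_setOf_eq] at h
      rw [h.2.1, h.2.2] at h0; norm_num at h0
  · intro hg
    have hρ : 0 < q i 2 ^ 2 + q i 3 ^ 2 := by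
      have hs := hq i; simp only [sphere3, Set.mem_setOf_eq] at hs; nlinarith
    have hx0 := congrFun hg 0
    have hx1 := congrFun hg 1
    simp only [gradIS, Pi.smul_apply, Matrix.cons_val_zero, Matrix.cons_val_one,
      Matrix.head_cons, smul_eq_mul, Pi.zero_apply] at hx0 hx1
    have hmi := hm i
    have h00 : q i 0 = 0 := by
      rcases mul_eq_zero.mp hx0 with h | h
      · nlinarith
      · rcases mul_eq_zero.mp h with h | h
        · exact h
        · nlinarith
    have h11 : q i 1 = 0 := by
      rcases mul_eq_zero.mp hx1 with h | h
      · nlinarith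
      · rcases mul_eq_zero.mp h with h | h
        · exact h
        · nlinarith
    rw [h00, h11] at h0; norm_num at h0
end
end
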